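/- arXiv:1410.6296 — 7 statements merged into one kernel-verified Lean document; each statement's English description precedes it below -/
import Mathlib

section
/- Let (V1, V2, V3) be a random vector distributed according to the multinomial distribution with n trials and probabilities (p1, p2, p3), p1+p2+p3=1, with p3 > 0 and n ≥ 0. Then E[V1 / (n + 1 - V1 - V2)] = (p1/p3) · (1 - (p1 + p2)^n). -/
open MeasureTheory Finset

private lemma tri_reindex (n : ℕ) (F : ℕ → ℕ → ℝ) :
    ∑ m ∈ range (n+1), ∑ k ∈ range (m+1), F k (m-k)
      = ∑ k1 ∈ range (n+1), ∑ k2 ∈ range (n+1-k1), F k1 k2 := by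
  rw [Finset.sum_sigma', Finset.sum_sigma']
  refine Finset.sum_nbij'
    (fun p : (_ : ℕ) × ℕ => (⟨p.2, p.1 - p.2⟩ : (_ : ℕ) × ℕ))
    (fun p : (_ : ℕ) × ℕ => (⟨p.1 + p.2, p.1⟩ : (_ : ℕ) × ℕ))
    ?_ ?_ ?_ ?_ ?_
  · rintro ⟨m, k⟩ h
    simp only [Finset.mem_sigma, Finset.mem_range] at h ⊢
    omega
  · rintro ⟨k1, k2⟩ h
    simp only [Finset.mem_sigma, Finset.mem_range] at h ⊢
    omega
  · rintro ⟨m, k⟩ h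
    simp only [Finset.mem_sigma, Finset.mem_range] at h
    have hm : k + (m - k) = m := by omega
    simp [hm]
  · rintro ⟨k1, k2⟩ h
    simp only [Finset.mem_sigma, Finset.mem_range] at h
    have hk : k1 + k2 - k1 = k2 := by omega
    simp [hk]
  · rintro ⟨m, k⟩ h
    rfl

private lemma coeff_eq (n k1 k2 : ℕ) (h : k1 + k2 ≤ n) :
    ((n.factorial : ℝ) / (k1.factorial * k2.factorial * (n - k1 - k2).factorial))
      = ((k1+k2).choose k1 : ℝ) * (n.choose (k1+k2)) := by
  have h1 : (k1+k2).choose k1 * k1.factorial * k2.factorial = (k1+k2).factorial := by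
    have := Nat.choose_mul_factorial_mul_factorial (Nat.le_add_right k1 k2)
    simpa using this
  have h2 := Nat.choose_mul_factorial_mul_factorial h
  have h3 : n - k1 - k2 = n - (k1+k2) := by omega
  have hne : ((k1.factorial * k2.factorial * (n - k1 - k2).factorial : ℕ) : ℝ) ≠ 0 := by
    positivity
  rw [h3] at hne ⊢
  rw [div_eq_iff (by push_cast at hne ⊢; exact hne)]
  push_cast [← h2, ← h1]
  ring

private lemma trinom (x y z : ℝ) (n : ℕ) :
    ∑ k1 ∈ range (n+1), ∑ k2 ∈ range (n+1-k1),
        ((n.factorial : ℝ) / (k1.factorial * k2.factorial * (n - k1 - k2).factorial))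
          * x^k1 * y^k2 * z^(n-k1-k2)
      = (x+y+z)^n := by
  rw [← tri_reindex]
  have : ∀ m ∈ range (n+1),
      (∑ k ∈ range (m+1),
        ((n.factorial : ℝ) / (k.factorial * (m-k).factorial * (n - k - (m-k)).factorial))
          * x^k * y^(m-k) * z^(n-k-(m-k)))
      = (x+y)^m * z^(n-m) * (n.choose m : ℝ) := by
    intro m hm
    rw [Finset.mem_range] at hm
    rw [add_pow, Finset.sum_mul, Finset.sum_mul]
    refine Finset.sum_congr rfl ?_
    intro k hk
    rw [Finset.mem_range] at hk
    have hkm : k + (m - k) = m := by omega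
    have h1 : n - k - (m - k) = n - m := by omega
    have h2 : k + (m - k) ≤ n := by omega
    rw [coeff_eq n k (m-k) h2, hkm, h1]
    ring
  rw [Finset.sum_congr rfl this, ← add_pow]

private lemma key_sum (n : ℕ) (p1 p2 p3 : ℝ) (hp3 : p3 ≠ 0) (hsum : p1 + p2 + p3 = 1) :
    ∑ k1 ∈ range (n+1), ∑ k2 ∈ range (n+1-k1),
      ((k1:ℝ) / ((n:ℝ)+1-k1-k2)) *
        ((n.factorial : ℝ) / (k1.factorial * k2.factorial * (n-k1-k2).factorial)
          * p1^k1 * p2^k2 * p3^(n-k1-k2))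
    = p1/p3 * (1 - (p1+p2)^n) := by
  set u : ℕ → ℕ → ℝ := fun j1 k2 =>
    (n.factorial : ℝ) / (j1.factorial * k2.factorial * (n-j1-k2).factorial)
      * p1^j1 * p2^k2 * p3^(n-j1-k2) with hu
  -- Step A: LHS = (p1/p3) * partial sum
  have stepA : ∑ k1 ∈ range (n+1), ∑ k2 ∈ range (n+1-k1),
      ((k1:ℝ) / ((n:ℝ)+1-k1-k2)) *
        ((n.factorial : ℝ) / (k1.factorial * k2.factorial * (n-k1-k2).factorial)
          * p1^k1 * p2^k2 * p3^(n-k1-k2))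
      = p1/p3 * ∑ j1 ∈ range n, ∑ k2 ∈ range (n-j1), u j1 k2 := by
    rw [Finset.sum_range_succ']
    simp only [Nat.cast_zero, zero_div, zero_mul, Finset.sum_const_zero, add_zero]
    rw [Finset.mul_sum]
    refine Finset.sum_congr rfl ?_
    intro i hi
    rw [Finset.mem_range] at hi
    have hidx : n + 1 - (i+1) = n - i := by omega
    rw [hidx, Finset.mul_sum]
    refine Finset.sum_congr rfl ?_
    intro k2 hk2
    rw [Finset.mem_range] at hk2
    obtain ⟨a, ha⟩ : ∃ a, n - (i+1) - k2 = a := ⟨_, rfl⟩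
    have ha2 : n - i - k2 = a + 1 := by omega
    have hcast : (n:ℝ) + 1 - ((i:ℕ)+1 : ℕ) - k2 = (a:ℝ) + 1 := by
      have : (n:ℝ) = ((a + 1 + i + k2 : ℕ) : ℝ) := by norm_cast; omega
      push_cast [this]; ring
    simp only [hu]
    rw [ha, ha2, hcast]
    push_cast [Nat.factorial_succ, pow_succ]
    have hfi : (i.factorial : ℝ) ≠ 0 := by positivity
    have hfk : (k2.factorial : ℝ) ≠ 0 := by positivity
    have hfa : (a.factorial : ℝ) ≠ 0 := by positivity
    have ha1 : ((a:ℝ) + 1) ≠ 0 := by positivity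
    have hi1 : ((i:ℝ) + 1) ≠ 0 := by positivity
    field_simp
  rw [stepA]
  -- Step B: partial sum = 1 - (p1+p2)^n
  have full : ∑ j1 ∈ range (n+1), ∑ k2 ∈ range (n+1-j1), u j1 k2 = 1 := by
    rw [hu, trinom, hsum, one_pow]
  have split : ∀ j1 ∈ range (n+1),
      ∑ k2 ∈ range (n+1-j1), u j1 k2
        = (∑ k2 ∈ range (n-j1), u j1 k2) + u j1 (n-j1) := by
    intro j1 hj1
    rw [Finset.mem_range] at hj1
    have : n + 1 - j1 = (n - j1) + 1 := by omega
    rw [this, Finset.sum_range_succ]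
  have bndry : ∀ j1 ∈ range (n+1),
      u j1 (n-j1) = p1^j1 * p2^(n-j1) * (n.choose j1 : ℝ) := by
    intro j1 hj1
    rw [Finset.mem_range] at hj1
    have h0 : n - j1 - (n - j1) = 0 := by omega
    have h2 : j1 + (n - j1) = n := by omega
    simp only [hu, h0, pow_zero, mul_one, Nat.factorial_zero]
    have hc := coeff_eq n j1 (n-j1) (by omega)
    rw [h0] at hc
    simp only [Nat.factorial_zero] at hc
    rw [hc, h2, Nat.choose_self]
    push_cast
    ring
  have hpart : ∑ j1 ∈ range n, ∑ k2 ∈ range (n-j1), u j1 k2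
      = 1 - (p1+p2)^n := by
    have e1 : ∑ j1 ∈ range (n+1), ∑ k2 ∈ range (n+1-j1), u j1 k2
        = (∑ j1 ∈ range (n+1), ∑ k2 ∈ range (n-j1), u j1 k2)
          + ∑ j1 ∈ range (n+1), u j1 (n-j1) := by
      rw [← Finset.sum_add_distrib]
      exact Finset.sum_congr rfl split
    have e2 : ∑ j1 ∈ range (n+1), ∑ k2 ∈ range (n-j1), u j1 k2
        = ∑ j1 ∈ range n, ∑ k2 ∈ range (n-j1), u j1 k2 := by
      rw [Finset.sum_range_succ]
      simp
    have e3 : ∑ j1 ∈ range (n+1), u j1 (n-j1) = (p1+p2)^n := by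
      rw [Finset.sum_congr rfl bndry, add_pow]
    rw [e1, e2, e3] at full
    linarith
  rw [hpart]

/-- For `(V1, V2, V3) ~ M(n; p1, p2, p3)` (with `V3 = n - V1 - V2`) and `p3 > 0`,
`E[V1 / (n + 1 - V1 - V2)] = (p1/p3) * (1 - (p1 + p2)^n)`. -/
theorem multinomial_harmonic_expectation {Ω : Type*} [MeasurableSpace Ω]
    (μ : Measure Ω) [IsProbabilityMeasure μ]
    (n : ℕ) (p1 p2 p3 : ℝ) (hp1 : 0 ≤ p1) (hp2 : 0 ≤ p2) (hp3 : 0 < p3)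
    (hsum : p1 + p2 + p3 = 1)
    (V1 V2 : Ω → ℕ) (hV1 : Measurable V1) (hV2 : Measurable V2)
    (hle : ∀ ω, V1 ω + V2 ω ≤ n)
    (hpmf : ∀ k1 k2 : ℕ, k1 + k2 ≤ n →
      μ {ω | V1 ω = k1 ∧ V2 ω = k2} =
        ENNReal.ofReal ((n.factorial : ℝ) /
            (k1.factorial * k2.factorial * (n - k1 - k2).factorial)
          * p1 ^ k1 * p2 ^ k2 * p3 ^ (n - k1 - k2))) :
    ∫ ω, (V1 ω : ℝ) / ((n : ℝ) + 1 - V1 ω - V2 ω) ∂μ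
      = p1 / p3 * (1 - (p1 + p2) ^ n) := by
  classical
  set T : Finset ((_ : ℕ) × ℕ) := (range (n+1)).sigma (fun k1 => range (n+1-k1)) with hT
  set g : ((_ : ℕ) × ℕ) → ℝ := fun p => (p.1 : ℝ) / ((n:ℝ)+1-p.1-p.2) with hg
  set A : ((_ : ℕ) × ℕ) → Set Ω := fun p => {ω | V1 ω = p.1 ∧ V2 ω = p.2} with hA
  have hAmeas : ∀ p, MeasurableSet (A p) := by
    intro p
    have : A p = V1 ⁻¹' {p.1} ∩ V2 ⁻¹' {p.2} := by
      ext ω; simp [hA, Set.mem_preimage]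
    rw [this]
    exact (hV1 (measurableSet_singleton _)).inter (hV2 (measurableSet_singleton _))
  have hfun : ∀ ω, (V1 ω : ℝ) / ((n : ℝ) + 1 - V1 ω - V2 ω)
      = ∑ p ∈ T, (A p).indicator (fun _ => g p) ω := by
    intro ω
    have hmem : (⟨V1 ω, V2 ω⟩ : (_ : ℕ) × ℕ) ∈ T := by
      simp only [hT, Finset.mem_sigma, Finset.mem_range]
      have := hle ω
      omega
    rw [Finset.sum_eq_single (⟨V1 ω, V2 ω⟩ : (_ : ℕ) × ℕ)]
    · simp [hA, hg, Set.indicator]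
    · rintro ⟨k1, k2⟩ hp hne
      have : ω ∉ A ⟨k1, k2⟩ := by
        simp only [hA, Set.mem_setOf_eq]
        rintro ⟨h1, h2⟩
        exact hne (by simp [← h1, ← h2])
      simp [Set.indicator_of_notMem this]
    · intro h; exact absurd hmem h
  have hint : ∀ p ∈ T, Integrable ((A p).indicator (fun _ => g p)) μ := by
    intro p _
    exact (integrable_const (g p)).indicator (hAmeas p)
  calc ∫ ω, (V1 ω : ℝ) / ((n : ℝ) + 1 - V1 ω - V2 ω) ∂μ
      = ∫ ω, ∑ p ∈ T, (A p).indicator (fun _ => g p) ω ∂μ := by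
        exact integral_congr_ae (Filter.Eventually.of_forall hfun)
    _ = ∑ p ∈ T, ∫ ω, (A p).indicator (fun _ => g p) ω ∂μ := integral_finset_sum T hint
    _ = ∑ p ∈ T, (μ (A p)).toReal * g p := by
        refine Finset.sum_congr rfl ?_
        intro p _
        rw [integral_indicator_const (g p) (hAmeas p), smul_eq_mul, measureReal_def]
    _ = ∑ p ∈ T, g p * ((n.factorial : ℝ) /
            (p.1.factorial * p.2.factorial * (n - p.1 - p.2).factorial)
          * p1 ^ p.1 * p2 ^ p.2 * p3 ^ (n - p.1 - p.2)) := by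
        refine Finset.sum_congr rfl ?_
        rintro ⟨k1, k2⟩ hp
        simp only [hT, Finset.mem_sigma, Finset.mem_range] at hp
        have hk : k1 + k2 ≤ n := by omega
        have := hpmf k1 k2 hk
        have hApmf : μ (A ⟨k1, k2⟩) = ENNReal.ofReal ((n.factorial : ℝ) /
            (k1.factorial * k2.factorial * (n - k1 - k2).factorial)
          * p1 ^ k1 * p2 ^ k2 * p3 ^ (n - k1 - k2)) := this
        rw [hApmf, ENNReal.toReal_ofReal (by positivity)]
        ring
    _ = ∑ k1 ∈ range (n+1), ∑ k2 ∈ range (n+1-k1),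
          ((k1:ℝ) / ((n:ℝ)+1-k1-k2)) *
            ((n.factorial : ℝ) / (k1.factorial * k2.factorial * (n-k1-k2).factorial)
              * p1^k1 * p2^k2 * p3^(n-k1-k2)) := by
        rw [hT, Finset.sum_sigma]
    _ = p1 / p3 * (1 - (p1 + p2) ^ n) := key_sum n p1 p2 p3 (ne_of_gt hp3) hsum
end

section
/- Let U1, ..., Un be i.i.d. uniform on (0,1) p-values and consider the Benjamini–Hochberg step-up test at level α ∈ (0,1) with critical values α_{i:n} = (i/n)·α: let R = max{i : U_{i:n} ≤ (i/n)α} (max ∅ = 0) and V = #{i : U_i ≤ α_{R:n}}. Then E[V / max(R,1)] = α (all hypotheses are true, so V and R coincide on {R ≥ 1}, and E[V/max(R,1)] = P(R ≥ 1) = α). -/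
open MeasureTheory ProbabilityTheory Finset
open scoped Classical

/-- number of p-values `≤ t`. -/
noncomputable def countLe {n : ℕ} (p : Fin n → ℝ) (t : ℝ) : ℕ :=
  (Finset.univ.filter fun i => p i ≤ t).card

/-- step-up rejection count: `c i` is the `(i+1)`-th critical value; for nondecreasing
critical values this equals `max {k : p_{k:n} ≤ c_{k:n}}` (with `max ∅ = 0`). -/
noncomputable def suCount {n : ℕ} (c : Fin n → ℝ) (p : Fin n → ℝ) : ℕ :=
  (Finset.univ.filter fun k : Fin n => k.1 + 1 ≤ countLe p (c k)).sup fun k => k.1 + 1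

/-- step-down rejection count. -/
noncomputable def sdCount {n : ℕ} (c : Fin n → ℝ) (p : Fin n → ℝ) : ℕ :=
  (Finset.univ.filter fun k : Fin n =>
    ∀ j : Fin n, j ≤ k → j.1 + 1 ≤ countLe p (c j)).sup fun k => k.1 + 1

/-- the critical value `c_{R:n}`, with the convention `c_{0:n} = 0`. -/
noncomputable def threshold {n : ℕ} (c : Fin n → ℝ) (R : ℕ) : ℝ :=
  if h : 0 < R ∧ R ≤ n then c ⟨R - 1, by omega⟩ else 0

/-- the σ-algebra generated by `(F̂_n(t))_{t ≥ λ}`. -/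
noncomputable def ecdfSigma {Ω : Type*} [MeasurableSpace Ω] {n : ℕ}
    (p : Fin n → Ω → ℝ) (lam : ℝ) : MeasurableSpace Ω :=
  MeasurableSpace.comap
    (fun ω => fun t : Set.Ici lam => (countLe (fun i => p i ω) (t : ℝ) : ℝ))
    MeasurableSpace.pi


section Aux
variable {n : ℕ}

lemma countLe_cast_eq_sum (p : Fin n → ℝ) (t : ℝ) :
    ((countLe p t : ℕ) : ℝ) = ∑ i : Fin n, if p i ≤ t then (1:ℝ) else 0 := by
  rw [countLe, Finset.card_filter]
  push_cast
  rfl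

lemma measurable_countLe (t : ℝ) : Measurable fun p : Fin n → ℝ => countLe p t := by
  have h : (fun p : Fin n → ℝ => countLe p t)
      = fun p => ∑ i : Fin n, if p i ≤ t then 1 else 0 := by
    funext p; rw [countLe, Finset.card_filter]
  rw [h]
  exact Finset.measurable_sum _ fun i _ =>
    Measurable.ite (measurableSet_le (measurable_pi_apply i) measurable_const)
      measurable_const measurable_const

lemma suCount_le (c p : Fin n → ℝ) : suCount c p ≤ n :=
  Finset.sup_le fun k _ => k.2

lemma measurable_finset_sup {ι Ω : Type*} [MeasurableSpace Ω] (s : Finset ι)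
    (g : ι → Ω → ℕ) (hg : ∀ i, Measurable (g i)) :
    Measurable fun a => s.sup fun i => g i a := by
  classical
  induction s using Finset.induction_on with
  | empty => simpa using measurable_const
  | @insert a s ha ih => simp only [Finset.sup_insert]; exact (hg a).sup ih

lemma measurable_suCount (c : Fin n → ℝ) : Measurable fun p : Fin n → ℝ => suCount c p := by
  have h : (fun p : Fin n → ℝ => suCount c p)
      = fun p => Finset.univ.sup fun k : Fin n =>
          if k.1 + 1 ≤ countLe p (c k) then k.1 + 1 else 0 := by
    funext p
    rw [suCount, Finset.sup_ite]
    simp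
  rw [h]
  exact measurable_finset_sup _ _ fun k =>
    Measurable.ite (measurableSet_le measurable_const (measurable_countLe (c k)))
      measurable_const measurable_const

lemma suCount_eq_iff (c p : Fin n → ℝ) {r : ℕ} (hr1 : 1 ≤ r) (hrn : r ≤ n) :
    suCount c p = r ↔
      (r ≤ countLe p (c ⟨r - 1, by omega⟩)) ∧
        ∀ k : Fin n, k.1 + 1 ≤ countLe p (c k) → k.1 + 1 ≤ r := by
  constructor
  · intro h
    have hne : (Finset.univ.filter fun k : Fin n => k.1 + 1 ≤ countLe p (c k)).Nonempty := by
      by_contra hcon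
      rw [Finset.not_nonempty_iff_eq_empty] at hcon
      rw [suCount, hcon] at h
      simp at h
      omega
    obtain ⟨k₀, hk₀mem, hk₀⟩ := Finset.exists_mem_eq_sup _ hne (fun k : Fin n => k.1 + 1)
    rw [suCount] at h
    constructor
    · have hv : k₀.1 + 1 = r := by rw [← h, hk₀]
      have hcond := (Finset.mem_filter.1 hk₀mem).2
      have hk0 : k₀ = ⟨r - 1, by omega⟩ := by
        apply Fin.ext; simp; omega
      rw [hk0] at hcond
      simpa [Nat.sub_add_cancel hr1] using hcond
    · intro k hk
      have hmem : k ∈ Finset.univ.filter fun k : Fin n => k.1 + 1 ≤ countLe p (c k) :=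
        Finset.mem_filter.2 ⟨Finset.mem_univ _, hk⟩
      have h3 := Finset.le_sup (f := fun k : Fin n => k.1 + 1) hmem
      omega
  · rintro ⟨h1, h2⟩
    apply le_antisymm
    · rw [suCount]
      exact Finset.sup_le fun k hk => h2 k (Finset.mem_filter.1 hk).2
    · rw [suCount]
      have hmem : (⟨r - 1, by omega⟩ : Fin n) ∈
          (Finset.univ.filter fun k : Fin n => k.1 + 1 ≤ countLe p (c k)) := by
        refine Finset.mem_filter.2 ⟨Finset.mem_univ _, ?_⟩
        simpa [Nat.sub_add_cancel hr1] using h1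
      have h3 := Finset.le_sup (f := fun k : Fin n => k.1 + 1) hmem
      simp only [Fin.val_mk] at h3
      omega

lemma countLe_update_of_le (p : Fin n → ℝ) (i : Fin n) {t : ℝ} (h0 : 0 ≤ t) (hpi : p i ≤ t) :
    countLe (Function.update p i 0) t = countLe p t := by
  rw [countLe, countLe]
  congr 1
  apply Finset.filter_congr
  intro j _
  by_cases hj : j = i
  · subst hj; simp [Function.update_self, h0, hpi]
  · simp [Function.update_of_ne hj]

lemma countLe_le_update (p : Fin n → ℝ) (i : Fin n) {t : ℝ} (h0 : 0 ≤ t) :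
    countLe p t ≤ countLe (Function.update p i 0) t := by
  rw [countLe, countLe]
  apply Finset.card_le_card
  intro j hj
  rw [Finset.mem_filter] at hj ⊢
  refine ⟨Finset.mem_univ _, ?_⟩
  by_cases hji : j = i
  · subst hji; simp [Function.update_self, h0]
  · simpa [Function.update_of_ne hji] using hj.2

lemma suCount_update_iff (c p : Fin n → ℝ) (hc0 : ∀ k, 0 < c k) (hcm : Monotone c)
    (i : Fin n) {r : ℕ} (hr1 : 1 ≤ r) (hrn : r ≤ n)
    (hpi : p i ≤ c ⟨r - 1, by omega⟩) :
    suCount c p = r ↔ suCount c (Function.update p i 0) = r := by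
  have hkey : ∀ k : Fin n, r - 1 ≤ k.1 →
      countLe (Function.update p i 0) (c k) = countLe p (c k) := by
    intro k hk
    apply countLe_update_of_le _ _ (hc0 k).le
    exact le_trans hpi (hcm (show (⟨r - 1, by omega⟩ : Fin n) ≤ k from hk))
  rw [suCount_eq_iff c p hr1 hrn, suCount_eq_iff c _ hr1 hrn]
  constructor
  · rintro ⟨h1, h2⟩
    refine ⟨by rw [hkey ⟨r - 1, by omega⟩ (le_refl _)]; exact h1, ?_⟩
    intro k hk
    by_cases hcase : k.1 + 1 ≤ r
    · exact hcase
    · rw [hkey k (by omega)] at hk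
      exact h2 k hk
  · rintro ⟨h1, h2⟩
    refine ⟨by rw [← hkey ⟨r - 1, by omega⟩ (le_refl _)]; exact h1, ?_⟩
    intro k hk
    exact h2 k (le_trans hk (countLe_le_update p i (hc0 k).le))

lemma one_le_suCount_update (c p : Fin n → ℝ) (hc0 : ∀ k, 0 ≤ c k) (hn : 0 < n) (i : Fin n) :
    1 ≤ suCount c (Function.update p i 0) := by
  have hcnt : 1 ≤ countLe (Function.update p i 0) (c ⟨0, hn⟩) := by
    rw [countLe]
    refine Finset.card_pos.2 ⟨i, Finset.mem_filter.2 ⟨Finset.mem_univ _, ?_⟩⟩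
    simp [Function.update_self, hc0 ⟨0, hn⟩]
  have hmem : (⟨0, hn⟩ : Fin n) ∈
      (Finset.univ.filter fun k : Fin n => k.1 + 1 ≤ countLe (Function.update p i 0) (c k)) :=
    Finset.mem_filter.2 ⟨Finset.mem_univ _, by simpa using hcnt⟩
  exact Finset.le_sup (f := fun k : Fin n => k.1 + 1) hmem

end Aux

/-- For `n` i.i.d. uniform(0,1) p-values (all hypotheses true), the BH step-up test with
critical values `α_{i:n} = (i/n)α` has `E[V / max(R,1)] = α`. -/
theorem bh_fdr_all_true {Ω : Type*} [MeasurableSpace Ω]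
    (μ : Measure Ω) [IsProbabilityMeasure μ] {m : ℕ}
    (U : Fin (m + 1) → Ω → ℝ) (hmeas : ∀ i, Measurable (U i))
    (hindep : iIndepFun U μ)
    (hunif : ∀ i, Measure.map (U i) μ = volume.restrict (Set.Ioo (0 : ℝ) 1))
    (a : ℝ) (ha : a ∈ Set.Ioo (0 : ℝ) 1) :
    ∫ ω,
        (countLe (fun i => U i ω)
            ((suCount (fun i : Fin (m + 1) => ((i.1 + 1 : ℝ) / (m + 1)) * a)
                (fun i => U i ω) : ℝ) / (m + 1) * a) : ℝ)
          / (max (suCount (fun i : Fin (m + 1) => ((i.1 + 1 : ℝ) / (m + 1)) * a)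
              (fun i => U i ω)) 1 : ℕ) ∂μ
      = a := by
  classical
  obtain ⟨ha0, ha1⟩ := ha
  set c : Fin (m + 1) → ℝ := fun i => ((i.1 + 1 : ℝ) / (m + 1)) * a with hcdef
  have hm1 : (0:ℝ) < (m : ℝ) + 1 := by positivity
  have hc0 : ∀ k : Fin (m + 1), 0 < c k := by
    intro k
    exact mul_pos (div_pos (by positivity) hm1) ha0
  have hcm : Monotone c := by
    intro j k hjk
    have hj : (j.1 : ℝ) ≤ (k.1 : ℝ) := by exact_mod_cast hjk
    simp only [hcdef]
    gcongr
  have hXmeas : Measurable fun ω => (fun i => U i ω) := measurable_pi_lambda _ hmeas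
  have hRmeas : Measurable fun ω => suCount c fun i => U i ω :=
    (measurable_suCount c).comp hXmeas
  -- leave-one-out p-value vectors
  set p' : Fin (m + 1) → Ω → (Fin (m + 1) → ℝ) :=
    fun i ω => Function.update (fun j => U j ω) i 0 with hp'def
  have hp'meas : ∀ i, Measurable (p' i) := by
    intro i
    apply measurable_pi_lambda
    intro j
    by_cases hj : j = i
    · subst hj; simpa [hp'def, Function.update_self] using measurable_const
    · simpa [hp'def, Function.update_of_ne hj] using hmeas j
  set B : Fin (m + 1) → ℕ → Set Ω := fun i r => {ω | suCount c (p' i ω) = r} with hBdef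
  have hBmeas : ∀ i r, MeasurableSet (B i r) := fun i r =>
    ((measurable_suCount c).comp (hp'meas i)) (measurableSet_singleton r)
  set S : ℕ → Fin (m + 1) → Set Ω :=
    fun r i => {ω | suCount c (fun j => U j ω) = r ∧ U i ω ≤ (r : ℝ) / (m + 1) * a} with hSdef
  have hSmeas : ∀ r i, MeasurableSet (S r i) := by
    intro r i
    have h1 : MeasurableSet {ω | suCount c (fun j => U j ω) = r} :=
      hRmeas (measurableSet_singleton r)
    have h2 : MeasurableSet {ω | U i ω ≤ (r : ℝ) / (m + 1) * a} :=
      (hmeas i) measurableSet_Iic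
    exact h1.inter h2
  -- uniform distribution computations
  have hU0 : ∀ i : Fin (m + 1), μ {ω | U i ω ≤ (0:ℝ)} = 0 := by
    intro i
    have : {ω | U i ω ≤ (0:ℝ)} = U i ⁻¹' Set.Iic 0 := rfl
    rw [this, ← Measure.map_apply (hmeas i) measurableSet_Iic, hunif i,
      Measure.restrict_apply measurableSet_Iic]
    have h2 : Set.Iic (0:ℝ) ∩ Set.Ioo 0 1 = ∅ := by
      ext x
      simp only [Set.mem_inter_iff, Set.mem_Iic, Set.mem_Ioo, Set.mem_empty_iff_false,
        iff_false, not_and]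
      intro h1 h2
      linarith
    rw [h2, measure_empty]
  have hUt : ∀ i : Fin (m + 1), ∀ t : ℝ, 0 < t → t < 1 →
      μ {ω | U i ω ≤ t} = ENNReal.ofReal t := by
    intro i t ht0 ht1
    have : {ω | U i ω ≤ t} = U i ⁻¹' Set.Iic t := rfl
    rw [this, ← Measure.map_apply (hmeas i) measurableSet_Iic, hunif i,
      Measure.restrict_apply measurableSet_Iic]
    have h2 : Set.Iic t ∩ Set.Ioo 0 1 = Set.Ioc 0 t := by
      ext x
      simp only [Set.mem_inter_iff, Set.mem_Iic, Set.mem_Ioo, Set.mem_Ioc]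
      constructor
      · rintro ⟨h1, h2, h3⟩; exact ⟨h2, h1⟩
      · rintro ⟨h1, h2⟩; exact ⟨h2, h1, lt_of_le_of_lt h2 ht1⟩
    rw [h2, Real.volume_Ioc, sub_zero]
  -- independence
  have hIndep2 : ∀ (i : Fin (m + 1)) (t : ℝ) (r : ℕ),
      μ ({ω | U i ω ≤ t} ∩ B i r) = μ {ω | U i ω ≤ t} * μ (B i r) := by
    intro i t r
    have hdisj : Disjoint ({i} : Finset (Fin (m + 1))) ({i}ᶜ) := disjoint_compl_right
    have h := hindep.indepFun_finset {i} ({i}ᶜ) hdisj hmeas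
    set φ : (({i} : Finset (Fin (m + 1))) → ℝ) → ℝ :=
      fun q => q ⟨i, Finset.mem_singleton_self i⟩ with hφdef
    set G : ((({i}ᶜ : Finset (Fin (m + 1))) → ℝ)) → ℕ :=
      fun q => suCount c (fun j =>
        if hj : j ∈ ({i}ᶜ : Finset (Fin (m + 1))) then q ⟨j, hj⟩ else 0) with hGdef
    have hφmeas : Measurable φ := measurable_pi_apply _
    have hGmeas : Measurable G := by
      apply (measurable_suCount c).comp
      apply measurable_pi_lambda
      intro j
      by_cases hj : j ∈ ({i}ᶜ : Finset (Fin (m + 1)))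
      · simpa [hj] using measurable_pi_apply (⟨j, hj⟩ : ({i}ᶜ : Finset (Fin (m + 1))))
      · simpa [hj] using measurable_const
    have h2 := h.comp hφmeas hGmeas
    have he1 : (φ ∘ fun ω (j : ({i} : Finset (Fin (m + 1)))) => U j ω) = U i := rfl
    have he2 : (G ∘ fun ω (j : ({i}ᶜ : Finset (Fin (m + 1)))) => U j ω)
        = fun ω => suCount c (p' i ω) := by
      funext ω
      simp only [Function.comp_apply, hGdef, hp'def]
      congr 1
      funext j
      by_cases hj : j = i
      · subst hj
        simp [Function.update_self]
      · have hj' : j ∈ ({i}ᶜ : Finset (Fin (m + 1))) := by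
          simp [Finset.mem_compl, hj]
        simp [hj', Function.update_of_ne hj]
    rw [he1, he2] at h2
    have h3 := h2.measure_inter_preimage_eq_mul (Set.Iic t) {r}
      measurableSet_Iic (measurableSet_singleton r)
    exact h3
  -- the pointwise rewriting
  have hpoint : ∀ ω,
      (countLe (fun i => U i ω)
            ((suCount c (fun i => U i ω) : ℝ) / (m + 1) * a) : ℝ)
          / ((max (suCount c (fun i => U i ω)) 1 : ℕ) : ℝ)
        = ∑ r ∈ Finset.range (m + 2), ∑ i : Fin (m + 1),
            ((max r 1 : ℕ) : ℝ)⁻¹ * Set.indicator (S r i) (fun _ => (1:ℝ)) ω := by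
    intro ω
    set r₀ : ℕ := suCount c (fun i => U i ω) with hr₀
    rw [Finset.sum_eq_single r₀]
    · rw [countLe_cast_eq_sum, div_eq_mul_inv, mul_comm, Finset.mul_sum]
      apply Finset.sum_congr rfl
      intro i _
      rw [Set.indicator_apply]
      by_cases hi : U i ω ≤ (r₀ : ℝ) / (m + 1) * a
      · rw [if_pos hi, if_pos]
        exact ⟨hr₀.symm, hi⟩
      · rw [if_neg hi, if_neg]
        intro hmem
        exact hi hmem.2
    · intro r hr hne
      apply Finset.sum_eq_zero
      intro i _
      rw [Set.indicator_of_notMem, mul_zero]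
      intro hmem
      exact hne (hmem.1 ▸ hr₀ ▸ rfl)
    · intro hnot
      exfalso
      apply hnot
      rw [Finset.mem_range]
      have := suCount_le c (fun i => U i ω)
      omega
  rw [integral_congr_ae (Filter.Eventually.of_forall hpoint)]
  -- compute the integral of the sum of indicators
  have hint : ∀ r ∈ Finset.range (m + 2), Integrable
      (fun ω => ∑ i : Fin (m + 1),
        ((max r 1 : ℕ) : ℝ)⁻¹ * Set.indicator (S r i) (fun _ => (1:ℝ)) ω) μ := by
    intro r _
    apply integrable_finset_sum
    intro i _
    exact (((integrable_const (1:ℝ)).indicator (hSmeas r i)).const_mul _)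
  rw [integral_finset_sum _ hint]
  have hswap : ∀ r ∈ Finset.range (m + 2),
      ∫ ω, (∑ i : Fin (m + 1),
          ((max r 1 : ℕ) : ℝ)⁻¹ * Set.indicator (S r i) (fun _ => (1:ℝ)) ω) ∂μ
        = ∑ i : Fin (m + 1), ((max r 1 : ℕ) : ℝ)⁻¹ * (μ (S r i)).toReal := by
    intro r _
    rw [integral_finset_sum _ (fun i _ =>
      (((integrable_const (1:ℝ)).indicator (hSmeas r i)).const_mul _))]
    apply Finset.sum_congr rfl
    intro i _
    rw [integral_const_mul]
    congr 1
    exact integral_indicator_one (hSmeas r i)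
  rw [Finset.sum_congr rfl hswap]
  -- evaluate each term
  have hterm : ∀ r ∈ Finset.range (m + 2), ∀ i : Fin (m + 1),
      ((max r 1 : ℕ) : ℝ)⁻¹ * (μ (S r i)).toReal = a / (m + 1) * (μ (B i r)).toReal := by
    intro r hrmem i
    rcases Nat.eq_zero_or_pos r with hr0 | hrpos
    · subst hr0
      have hS0 : μ (S 0 i) = 0 := by
        apply measure_mono_null _ (hU0 i)
        intro ω hω
        have := hω.2
        simpa using this
      have hB0 : μ (B i 0) = 0 := by
        have : B i 0 = ∅ := by
          ext ω
          simp only [hBdef, Set.mem_setOf_eq, Set.mem_empty_iff_false, iff_false]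
          intro hcon
          have := one_le_suCount_update c (fun j => U j ω) (fun k => (hc0 k).le)
            (Nat.succ_pos m) i
          simp only [hp'def] at hcon
          omega
        rw [this, measure_empty]
      rw [hS0, hB0]
      simp
    · have hrn : r ≤ m + 1 := by
        rw [Finset.mem_range] at hrmem; omega
      set t : ℝ := (r : ℝ) / (m + 1) * a with htdef
      have hceq : c ⟨r - 1, by omega⟩ = t := by
        simp only [hcdef, htdef]
        congr 2
        have : ((r - 1 : ℕ) : ℝ) + 1 = (r : ℝ) := by
          have h5 : (r - 1) + 1 = r := by omega
          exact_mod_cast h5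
        simpa using this
      have hSeq : S r i = {ω | U i ω ≤ t} ∩ B i r := by
        ext ω
        simp only [hSdef, hBdef, Set.mem_setOf_eq, Set.mem_inter_iff]
        constructor
        · rintro ⟨h1, h2⟩
          refine ⟨h2, ?_⟩
          rw [hp'def]
          exact ((suCount_update_iff c (fun j => U j ω) hc0 hcm i hrpos hrn
            (by rw [hceq]; exact h2)).1 h1)
        · rintro ⟨h2, h1⟩
          refine ⟨?_, h2⟩
          rw [hp'def] at h1
          exact ((suCount_update_iff c (fun j => U j ω) hc0 hcm i hrpos hrn
            (by rw [hceq]; exact h2)).2 h1)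
      have ht0 : 0 < t := mul_pos (div_pos (by positivity) hm1) ha0
      have ht1 : t < 1 := by
        have h6 : t ≤ a := by
          rw [htdef]
          have : (r : ℝ) / (m + 1) ≤ 1 := by
            rw [div_le_one hm1]
            exact_mod_cast hrn
          nlinarith
        linarith
      rw [hSeq, hIndep2 i t r, hUt i t ht0 ht1]
      rw [ENNReal.toReal_mul, ENNReal.toReal_ofReal ht0.le]
      have hmax : max r 1 = r := max_eq_left hrpos
      rw [hmax]
      rw [← mul_assoc]
      congr 1
      have hrne : (r : ℝ) ≠ 0 := by
        exact_mod_cast Nat.pos_iff_ne_zero.1 hrpos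
      field_simp [htdef]
      rw [htdef]
      field_simp
  rw [Finset.sum_congr rfl (fun r hr => Finset.sum_congr rfl (fun i _ => hterm r hr i))]
  rw [Finset.sum_comm]
  -- partition sum
  have hpart : ∀ i : Fin (m + 1),
      ∑ r ∈ Finset.range (m + 2), (μ (B i r)).toReal = 1 := by
    intro i
    rw [← ENNReal.toReal_sum (fun r _ => measure_ne_top μ _)]
    have hdisj : (↑(Finset.range (m + 2)) : Set ℕ).PairwiseDisjoint (B i) := by
      intro r _ s _ hrs
      simp only [Function.onFun]
      rw [Set.disjoint_left]
      intro ω h1 h2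
      exact hrs (h1.symm.trans h2)
    have h7 : ∑ r ∈ Finset.range (m + 2), μ (B i r)
        = μ (⋃ r ∈ Finset.range (m + 2), B i r) :=
      (measure_biUnion_finset hdisj fun r _ => hBmeas i r).symm
    rw [h7]
    have h8 : (⋃ r ∈ Finset.range (m + 2), B i r) = Set.univ := by
      ext ω
      simp only [Set.mem_iUnion, Finset.mem_range, Set.mem_univ, iff_true, hBdef,
        Set.mem_setOf_eq]
      refine ⟨suCount c (p' i ω), ?_, rfl⟩
      have := suCount_le c (p' i ω)
      omega
    rw [h8, measure_univ, ENNReal.toReal_one]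
  have hfinal : ∀ i : Fin (m + 1),
      ∑ r ∈ Finset.range (m + 2), a / (m + 1) * (μ (B i r)).toReal = a / (m + 1) := by
    intro i
    rw [← Finset.mul_sum, hpart i, mul_one]
  rw [Finset.sum_congr rfl (fun i _ => hfinal i)]
  rw [Finset.sum_const, Finset.card_univ, Fintype.card_fin]
  rw [nsmul_eq_mul]
  push_cast
  field_simp
end

section
/- Under the BI Model with 0 < λ ≤ λ1 < γ1 ≤ 1, conditionally on the number n0(γ1) of true p-values ≤ γ1 (true p-values being conditionally i.i.d. uniform on (0,γ1)), it holds that E[V(λ) / (n0(γ1) + 1 - V(λ1))] = (λ/(γ1-λ1)) · (1 - (λ1/γ1)^{n0(γ1)}) ≤ λ/(γ1 - λ1), where V(t) counts true p-values ≤ t. -/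
open MeasureTheory ProbabilityTheory Finset
open scoped Classical

set_option maxHeartbeats 1000000
set_option synthInstance.maxHeartbeats 1000000

lemma sum_funs (M : ℕ) (f : Fin 3 → ℝ) :
    ∑ y : Fin M → Fin 3, ((Finset.univ.filter fun i => y i = 0).card : ℝ) * ∏ i, f (y i)
    = M * f 0 * (f 0 + f 1 + f 2) ^ (M - 1) := by
  have hcard : ∀ y : Fin M → Fin 3,
      ((Finset.univ.filter fun i => y i = 0).card : ℝ)
        = ∑ i : Fin M, if y i = 0 then (1:ℝ) else 0 := by
    intro y
    rw [Finset.card_filter]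
    push_cast
    rfl
  calc ∑ y : Fin M → Fin 3, ((Finset.univ.filter fun i => y i = 0).card : ℝ) * ∏ i, f (y i)
      = ∑ y : Fin M → Fin 3, ∑ i : Fin M, (if y i = 0 then (1:ℝ) else 0) * ∏ j, f (y j) := by
        simp_rw [hcard, Finset.sum_mul]
    _ = ∑ i : Fin M, ∑ y : Fin M → Fin 3, (if y i = 0 then (1:ℝ) else 0) * ∏ j, f (y j) :=
        Finset.sum_comm
    _ = ∑ i : Fin M, f 0 * (f 0 + f 1 + f 2) ^ (M - 1) := by
        refine Finset.sum_congr rfl fun i _ => ?_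
        have hfun : ∀ y : Fin M → Fin 3,
            (if y i = 0 then (1:ℝ) else 0) * ∏ j, f (y j)
              = ∏ j, (if j = i then (if y j = 0 then f 0 else 0) else f (y j)) := by
          intro y
          rw [← Finset.mul_prod_erase Finset.univ
                (fun j => if j = i then (if y j = 0 then f 0 else 0) else f (y j))
                (Finset.mem_univ i),
              ← Finset.mul_prod_erase Finset.univ (fun j => f (y j)) (Finset.mem_univ i),
              if_pos rfl]
          have herase : ∏ j ∈ Finset.univ.erase i,
              (if j = i then (if y j = 0 then f 0 else 0) else f (y j))
              = ∏ j ∈ Finset.univ.erase i, f (y j) := by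
            refine Finset.prod_congr rfl fun j hj => ?_
            rw [if_neg (Finset.mem_erase.1 hj).1]
          rw [herase, ← mul_assoc]
          congr 1
          by_cases h : y i = 0 <;> simp [h]
        simp_rw [hfun]
        rw [← Fintype.prod_sum (fun j v => if j = i then (if v = 0 then f 0 else 0) else f v)]
        have hsum : ∀ j : Fin M,
            (∑ v : Fin 3, if j = i then (if v = 0 then f 0 else 0) else f v)
              = if j = i then f 0 else (f 0 + f 1 + f 2) := by
          intro j
          by_cases h : j = i <;> simp [h, Fin.sum_univ_three]
        simp_rw [hsum]
        rw [← Finset.mul_prod_erase Finset.univ _ (Finset.mem_univ i), if_pos rfl]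
        congr 1
        rw [Finset.prod_congr rfl (fun j hj => if_neg (Finset.mem_erase.1 hj).1),
            Finset.prod_const, Finset.card_erase_of_mem (Finset.mem_univ i)]
        simp
    _ = M * f 0 * (f 0 + f 1 + f 2) ^ (M - 1) := by
        rw [Finset.sum_const, Finset.card_univ, Fintype.card_fin, nsmul_eq_mul]; ring

lemma key_sum_s8 (M : ℕ) (p : Fin 3 → ℝ) (hp2 : p 2 ≠ 0) :
    ∑ y : Fin M → Fin 3,
      (∏ i, p (y i)) *
        (((Finset.univ.filter fun i => y i = 0).card : ℝ) /
          (((Finset.univ.filter fun i => y i = 2).card : ℝ) + 1))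
    = p 0 / p 2 * ((p 0 + p 1 + p 2) ^ M - (p 0 + p 1) ^ M) := by
  rcases Nat.eq_zero_or_pos M with hM | hM
  · subst hM
    simp
  obtain ⟨m, rfl⟩ : ∃ m, M = m + 1 := ⟨M - 1, by omega⟩
  set n0 : (Fin (m+1) → Fin 3) → ℕ := fun y => (Finset.univ.filter fun i => y i = 0).card with hn0
  set n2 : (Fin (m+1) → Fin 3) → ℕ := fun y => (Finset.univ.filter fun i => y i = 2).card with hn2
  have step1 : ∀ y : Fin (m+1) → Fin 3,
      (∏ i, p (y i)) * ((n0 y : ℝ) / ((n2 y : ℝ) + 1))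
        = ∫ t in (0:ℝ)..1, ((n0 y : ℝ) * ∏ i, p (y i)) * t ^ (n2 y) := by
    intro y
    rw [intervalIntegral.integral_const_mul, integral_pow]
    have : ((n2 y : ℝ) + 1) ≠ 0 := by positivity
    field_simp
    ring
  rw [Finset.sum_congr rfl fun y _ => step1 y]
  rw [← intervalIntegral.integral_finset_sum]
  swap
  · intro y _
    exact (Continuous.intervalIntegrable (by continuity) _ _)
  have step2 : ∀ t : ℝ,
      ∑ y : Fin (m+1) → Fin 3, ((n0 y : ℝ) * ∏ i, p (y i)) * t ^ (n2 y)
        = ((m:ℝ)+1) * p 0 * (p 0 + p 1 + p 2 * t) ^ m := by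
    intro t
    have hprod : ∀ y : Fin (m+1) → Fin 3,
        (∏ i, (if y i = 2 then p 2 * t else p (y i)))
          = (∏ i, p (y i)) * t ^ (n2 y) := by
      intro y
      have h1 : ∀ i : Fin (m+1),
          (if y i = 2 then p 2 * t else p (y i)) = p (y i) * (if y i = 2 then t else 1) := by
        intro i; by_cases h : y i = 2 <;> simp [h]
      rw [Finset.prod_congr rfl (fun i _ => h1 i), Finset.prod_mul_distrib]
      congr 1
      rw [Finset.prod_ite (fun _ => t) (fun _ => (1:ℝ)), Finset.prod_const,
        Finset.prod_const_one, mul_one]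
    have := sum_funs (m+1) (fun v => if v = 2 then p 2 * t else p v)
    simp only [hprod] at this
    calc ∑ y : Fin (m+1) → Fin 3, ((n0 y : ℝ) * ∏ i, p (y i)) * t ^ (n2 y)
        = ∑ y : Fin (m+1) → Fin 3, (n0 y : ℝ) * ((∏ i, p (y i)) * t ^ (n2 y)) := by
          refine Finset.sum_congr rfl fun y _ => by ring
      _ = ((m:ℝ)+1) * p 0 * (p 0 + p 1 + p 2 * t) ^ m := by
          rw [this]
          simp only [if_neg (by decide : ¬(0:Fin 3) = 2), if_neg (by decide : ¬(1:Fin 3) = 2),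
            if_true, if_pos rfl]
          push_cast
          ring
  simp_rw [step2]
  have hderiv : ∀ t : ℝ, HasDerivAt (fun t : ℝ => (p 0 + p 1 + p 2 * t) ^ (m+1))
      ((((m:ℝ)+1) * (p 0 + p 1 + p 2 * t) ^ m) * p 2) t := by
    intro t
    have h1 : HasDerivAt (fun t : ℝ => p 0 + p 1 + p 2 * t) (p 2) t := by
      simpa using ((hasDerivAt_id t).const_mul (p 2)).const_add (p 0 + p 1)
    have := h1.fun_pow (m+1)
    simpa [mul_comm, mul_assoc, mul_left_comm] using this
  have hFTC : ∫ t in (0:ℝ)..1, (((m:ℝ)+1) * (p 0 + p 1 + p 2 * t) ^ m) * p 2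
      = (p 0 + p 1 + p 2 * 1) ^ (m+1) - (p 0 + p 1 + p 2 * 0) ^ (m+1) := by
    exact intervalIntegral.integral_eq_sub_of_hasDerivAt (fun t _ => hderiv t)
      (Continuous.intervalIntegrable (by continuity) _ _)
  have hcongr : ∀ t : ℝ, ((m:ℝ)+1) * p 0 * (p 0 + p 1 + p 2 * t) ^ m
      = (p 0 / p 2) * ((((m:ℝ)+1) * (p 0 + p 1 + p 2 * t) ^ m) * p 2) := by
    intro t; field_simp
  simp_rw [hcongr]
  rw [intervalIntegral.integral_const_mul, hFTC]
  norm_num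

/-- Conditionally on `n₀(γ₁) = M` true p-values being i.i.d. uniform on `(0, γ₁)`
(with `0 < λ ≤ λ₁ < γ₁ ≤ 1`), one has
`E[V(λ)/(M + 1 - V(λ₁))] = (λ/(γ₁-λ₁))·(1 - (λ₁/γ₁)^M) ≤ λ/(γ₁-λ₁)`,
where `V(t)` counts the true p-values `≤ t`. -/
theorem conditional_multinomial_bound {Ω : Type*} [MeasurableSpace Ω]
    (μ : Measure Ω) [IsProbabilityMeasure μ] {M : ℕ}
    (lam lam1 gam1 : ℝ) (h0 : 0 < lam) (h1 : lam ≤ lam1) (h2 : lam1 < gam1) (h3 : gam1 ≤ 1)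
    (q : Fin M → Ω → ℝ) (hmeas : ∀ i, Measurable (q i))
    (hindep : iIndepFun q μ)
    (hunif : ∀ i, Measure.map (q i) μ
      = (ENNReal.ofReal gam1)⁻¹ • volume.restrict (Set.Ioo (0 : ℝ) gam1)) :
    (∫ ω, (countLe (fun i => q i ω) lam : ℝ)
        / ((M : ℝ) + 1 - (countLe (fun i => q i ω) lam1 : ℝ)) ∂μ
      = lam / (gam1 - lam1) * (1 - (lam1 / gam1) ^ M)) ∧
    ∫ ω, (countLe (fun i => q i ω) lam : ℝ)
        / ((M : ℝ) + 1 - (countLe (fun i => q i ω) lam1 : ℝ)) ∂μ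
      ≤ lam / (gam1 - lam1) := by
  have hl1 : (0:ℝ) < lam1 := lt_of_lt_of_le h0 h1
  have hg0 : (0:ℝ) < gam1 := lt_trans hl1 h2
  have hgl : (0:ℝ) < gam1 - lam1 := by linarith
  set cls : ℝ → Fin 3 := fun x => if x ≤ lam then 0 else if x ≤ lam1 then 1 else 2 with hcls
  have hclsmeas : Measurable cls := by
    refine Measurable.ite ?_ measurable_const (Measurable.ite ?_ measurable_const measurable_const)
    · exact measurableSet_Iic
    · exact measurableSet_Iic
  set G : (Fin M → Fin 3) → ℝ := fun y =>
    ((Finset.univ.filter fun i => y i = 0).card : ℝ) /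
      (((Finset.univ.filter fun i => y i = 2).card : ℝ) + 1) with hG
  set T : Ω → (Fin M → Fin 3) := fun ω i => cls (q i ω) with hT
  have hTmeas : Measurable T :=
    measurable_pi_lambda _ fun i => hclsmeas.comp (hmeas i)
  -- pointwise identification of the integrand
  have hcls0 : ∀ x : ℝ, cls x = 0 ↔ x ≤ lam := by
    intro x
    simp only [hcls]
    by_cases hx : x ≤ lam
    · simp [hx]
    · by_cases hx1 : x ≤ lam1 <;> simp [hx, hx1]
  have hcls1 : ∀ x : ℝ, cls x = 1 ↔ (lam < x ∧ x ≤ lam1) := by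
    intro x
    simp only [hcls]
    by_cases hx : x ≤ lam
    · simp only [if_pos hx]
      constructor
      · intro h; exact absurd h (by decide)
      · rintro ⟨hlt, _⟩; linarith
    · by_cases hx1 : x ≤ lam1
      · simp only [if_neg hx, if_pos hx1]
        exact ⟨fun _ => ⟨lt_of_not_ge hx, hx1⟩, fun _ => by trivial⟩
      · simp only [if_neg hx, if_neg hx1]
        constructor
        · intro h; exact absurd h (by decide)
        · rintro ⟨_, hle⟩; exact absurd hle hx1
  have hcls2 : ∀ x : ℝ, ¬ cls x = 2 ↔ x ≤ lam1 := by
    intro x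
    simp only [hcls]
    by_cases hx : x ≤ lam
    · simp [hx, le_trans hx h1]
    · by_cases hx1 : x ≤ lam1 <;> simp [hx, hx1]
  have hpt : ∀ ω, (countLe (fun i => q i ω) lam : ℝ)
      / ((M : ℝ) + 1 - (countLe (fun i => q i ω) lam1 : ℝ)) = G (T ω) := by
    intro ω
    have ha : countLe (fun i => q i ω) lam
        = (Finset.univ.filter fun i => T ω i = 0).card := by
      unfold countLe
      exact congrArg Finset.card (Finset.filter_congr fun i _ => by
        simp [hT, hcls0 (q i ω)])
    have hb : countLe (fun i => q i ω) lam1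
        + (Finset.univ.filter fun i => T ω i = 2).card = M := by
      unfold countLe
      have : (Finset.univ.filter fun i => q i ω ≤ lam1)
          = (Finset.univ.filter fun i => ¬ T ω i = 2) := by
        exact Finset.filter_congr fun i _ => by simp [hT, hcls2 (q i ω)]
      rw [this, add_comm]
      rw [Finset.card_filter_add_card_filter_not]
      simp
    have hbR : ((M : ℝ) + 1 - (countLe (fun i => q i ω) lam1 : ℝ))
        = ((Finset.univ.filter fun i => T ω i = 2).card : ℝ) + 1 := by
      have := congrArg (fun n : ℕ => (n : ℝ)) hb
      push_cast at this
      linarith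
    rw [ha, hbR]
  simp_rw [hpt]
  -- push the integral to the finite space
  haveI : IsProbabilityMeasure (Measure.map T μ) :=
    Measure.isProbabilityMeasure_map hTmeas.aemeasurable
  have hGmeas : Measurable G := measurable_of_countable _
  have hmap : ∫ ω, G (T ω) ∂μ = ∑ y : Fin M → Fin 3, ((Measure.map T μ) {y}).toReal * G y := by
    rw [← integral_map hTmeas.aemeasurable hGmeas.aestronglyMeasurable,
      integral_fintype (Integrable.of_finite)]
    simp [smul_eq_mul, measureReal_def]
  -- the point masses
  set p : Fin 3 → ℝ := ![lam / gam1, (lam1 - lam) / gam1, (gam1 - lam1) / gam1] with hp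
  have hpnn : ∀ v, 0 ≤ p v := by
    intro v
    fin_cases v <;> simp [hp]
    · exact div_nonneg h0.le hg0.le
    · exact div_nonneg (by linarith) hg0.le
    · exact div_nonneg (by linarith) hg0.le
  have hindepY : iIndepFun (fun i => cls ∘ q i) μ :=
    hindep.comp _ fun _ => hclsmeas
  have hsingle : ∀ (i : Fin M) (v : Fin 3),
      μ ((cls ∘ q i) ⁻¹' {v}) = ENNReal.ofReal (p v) := by
    intro i v
    have hbase : ∀ w : Fin 3, μ ((cls ∘ q i) ⁻¹' {w})
        = (ENNReal.ofReal gam1)⁻¹ * volume ((cls ⁻¹' {w}) ∩ Set.Ioo (0:ℝ) gam1) := by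
      intro w
      have hcv : MeasurableSet (cls ⁻¹' {w}) := hclsmeas (measurableSet_singleton w)
      rw [show (cls ∘ q i) ⁻¹' {w} = q i ⁻¹' (cls ⁻¹' {w}) from rfl,
        ← Measure.map_apply (hmeas i) hcv, hunif i, Measure.smul_apply,
        Measure.restrict_apply hcv, smul_eq_mul]
    have hfin : ∀ a : ℝ, 0 ≤ a →
        (ENNReal.ofReal gam1)⁻¹ * ENNReal.ofReal a = ENNReal.ofReal (a / gam1) := by
      intro a ha
      rw [ENNReal.ofReal_div_of_pos hg0, ENNReal.div_eq_inv_mul]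
    fin_cases v
    · show μ ((cls ∘ q i) ⁻¹' {(0 : Fin 3)}) = ENNReal.ofReal (p 0)
      have hset : cls ⁻¹' {(0 : Fin 3)} ∩ Set.Ioo (0:ℝ) gam1 = Set.Ioc 0 lam := by
        ext x
        simp only [Set.mem_inter_iff, Set.mem_preimage, Set.mem_singleton_iff,
          Set.mem_Ioo, Set.mem_Ioc, hcls0 x]
        constructor
        · rintro ⟨hle, hx0, _⟩; exact ⟨hx0, hle⟩
        · rintro ⟨hx0, hle⟩; exact ⟨hle, hx0, by linarith⟩
      rw [hbase 0, hset, Real.volume_Ioc, sub_zero, hfin lam h0.le]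
      simp [hp]
    · show μ ((cls ∘ q i) ⁻¹' {(1 : Fin 3)}) = ENNReal.ofReal (p 1)
      have hset : cls ⁻¹' {(1 : Fin 3)} ∩ Set.Ioo (0:ℝ) gam1 = Set.Ioc lam lam1 := by
        ext x
        simp only [Set.mem_inter_iff, Set.mem_preimage, Set.mem_singleton_iff,
          Set.mem_Ioo, Set.mem_Ioc, hcls1 x]
        constructor
        · rintro ⟨⟨hlt, hle⟩, _, _⟩; exact ⟨hlt, hle⟩
        · rintro ⟨hlt, hle⟩; exact ⟨⟨hlt, hle⟩, by linarith, by linarith⟩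
      rw [hbase 1, hset, Real.volume_Ioc, hfin _ (by linarith)]
      simp [hp]
    · show μ ((cls ∘ q i) ⁻¹' {(2 : Fin 3)}) = ENNReal.ofReal (p 2)
      have hset : cls ⁻¹' {(2 : Fin 3)} ∩ Set.Ioo (0:ℝ) gam1 = Set.Ioo lam1 gam1 := by
        ext x
        have h2x : cls x = 2 ↔ lam1 < x := by
          rw [← not_le, ← hcls2 x, not_not]
        simp only [Set.mem_inter_iff, Set.mem_preimage, Set.mem_singleton_iff,
          Set.mem_Ioo, h2x]
        constructor
        · rintro ⟨hlt, _, hxg⟩; exact ⟨hlt, hxg⟩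
        · rintro ⟨hlt, hxg⟩; exact ⟨hlt, by linarith, hxg⟩
      rw [hbase 2, hset, Real.volume_Ioo, hfin _ (by linarith)]
      simp [hp]
  have hpoint : ∀ y : Fin M → Fin 3, ((Measure.map T μ) {y}).toReal = ∏ i, p (y i) := by
    intro y
    have hpre : T ⁻¹' {y} = ⋂ i, (cls ∘ q i) ⁻¹' {y i} := by
      ext ω
      simp [hT, Set.mem_iInter, funext_iff, Function.comp]
    rw [Measure.map_apply hTmeas (measurableSet_singleton y), hpre,
      hindepY.meas_iInter (fun i => ⟨{y i}, measurableSet_singleton _, rfl⟩),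
      ENNReal.toReal_prod]
    exact Finset.prod_congr rfl fun i _ => by
      rw [hsingle i (y i), ENNReal.toReal_ofReal (hpnn (y i))]
  have hp2ne : p 2 ≠ 0 := by
    have : p 2 = (gam1 - lam1) / gam1 := by simp [hp]
    rw [this]
    positivity
  have hEq : ∫ ω, G (T ω) ∂μ = lam / (gam1 - lam1) * (1 - (lam1 / gam1) ^ M) := by
    rw [hmap]
    simp_rw [hpoint]
    rw [show (∑ y : Fin M → Fin 3, (∏ i, p (y i)) * G y) = _ from key_sum_s8 M p hp2ne]
    have e1 : p 0 + p 1 + p 2 = 1 := by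
      simp only [hp, Matrix.cons_val_zero, Matrix.cons_val_one, Matrix.head_cons,
        Matrix.cons_val_two, Matrix.tail_cons]
      field_simp
      ring
    have e2 : p 0 + p 1 = lam1 / gam1 := by
      simp only [hp, Matrix.cons_val_zero, Matrix.cons_val_one, Matrix.head_cons]
      field_simp
      ring
    have e3 : p 0 / p 2 = lam / (gam1 - lam1) := by
      simp only [hp, Matrix.cons_val_zero, Matrix.cons_val_two, Matrix.tail_cons,
        Matrix.head_cons]
      have hgne : gam1 ≠ 0 := ne_of_gt hg0
      have hglne : gam1 - lam1 ≠ 0 := ne_of_gt hgl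
      field_simp
    rw [e1, e2, e3, one_pow]
  constructor
  · exact hEq
  · rw [hEq]
    have hb : (0:ℝ) ≤ lam / (gam1 - lam1) := by positivity
    have hx : (0:ℝ) ≤ (lam1 / gam1) ^ M := by positivity
    nlinarith
end

section
/- Under the BI Model with estimator n̂_0 > 0 a measurable function of (F̂_n(t))_{t≥λ}, one has (1/λ)·E[V(λ)/n̂_0] = E[Σ_{i: H_i=0} 1/n̂_0^{(i)}], where n̂_0^{(i)} is the estimator evaluated at the p-value vector with the i-th coordinate replaced by 0. -/
open MeasureTheory ProbabilityTheory Finset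
open scoped Classical
open scoped ENNReal

lemma countLe_dite {n : ℕ} (H : Fin n → Bool) (u x : Fin n → ℝ) (i : Fin n)
    {lam t : ℝ} (h0 : 0 < lam)
    (hui : (if H i then x i else u i) ≤ lam) (ht : lam ≤ t) :
    countLe (fun j => if hj : j = i then 0 else if H j then x j else u j) t
      = countLe (fun j => if H j then x j else u j) t := by
  unfold countLe
  congr 1
  apply Finset.filter_congr
  intro j _
  by_cases hj : j = i
  · subst hj
    simp only [dif_pos rfl]
    constructor
    · intro _; exact le_trans hui ht
    · intro _; exact le_trans h0.le ht
  · simp [hj]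

lemma indep_aux {Ω : Type*} [MeasurableSpace Ω] (μ : Measure Ω) [IsProbabilityMeasure μ]
    {n : ℕ} (H : Fin n → Ω → Bool) (U ξ : Fin n → Ω → ℝ)
    (hUmeas : ∀ i, Measurable (U i)) (hξmeas : ∀ i, Measurable (ξ i))
    (hHmeas : ∀ i, Measurable (H i))
    (hUindep : iIndepFun U μ)
    (hUHξ : IndepFun (fun ω => fun i => U i ω)
      (fun ω => ((fun i => H i ω), (fun i => ξ i ω))) μ) (i : Fin n) :
    IndepFun (U i)
      (fun ω => ((fun j : {j : Fin n // j ≠ i} => U j.1 ω),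
        ((fun j => H j ω), (fun j => ξ j ω)))) μ := by
  classical
  set Ψ : Ω → ({j : Fin n // j ≠ i} → ℝ) := fun ω => fun j => U j.1 ω with hΨdef
  set Θ : Ω → (Fin n → Bool) × (Fin n → ℝ) :=
    fun ω => ((fun j => H j ω), (fun j => ξ j ω)) with hΘdef
  have hΨmeas : Measurable Ψ := measurable_pi_lambda _ fun j => hUmeas j.1
  have hΘmeas : Measurable Θ :=
    Measurable.prodMk (measurable_pi_lambda _ fun j => hHmeas j)
      (measurable_pi_lambda _ fun j => hξmeas j)
  set r : (Fin n → ℝ) → ({j : Fin n // j ≠ i} → ℝ) := fun u j => u j.1 with hrdef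
  have hrmeas : Measurable r := measurable_pi_lambda _ fun j => measurable_pi_apply _
  -- independence of U i and Ψ
  have hUiΨ : IndepFun (U i) Ψ μ := by
    have h := hUindep.indepFun_finset {i} ({i}ᶜ) disjoint_compl_right hUmeas
    have h2 := h.comp
      (φ := fun v : ({i} : Finset (Fin n)) → ℝ => v ⟨i, Finset.mem_singleton_self i⟩)
      (ψ := fun v : (({i}ᶜ : Finset (Fin n)) : Finset (Fin n)) → ℝ =>
        fun j : {j : Fin n // j ≠ i} => v ⟨j.1, by simp [j.2]⟩)
      (measurable_pi_apply _ : Measurable fun v : ({i} : Finset (Fin n)) → ℝ =>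
        v ⟨i, Finset.mem_singleton_self i⟩)
      (measurable_pi_lambda _ fun j => measurable_pi_apply _)
    exact h2
  have hΨΘ : IndepFun Ψ Θ μ := hUHξ.comp hrmeas measurable_id
  -- π-systems
  set p1 : Set (Set Ω) := {s | ∃ t, MeasurableSet t ∧ U i ⁻¹' t = s} with hp1def
  set p2 : Set (Set Ω) :=
    {s | ∃ B C, MeasurableSet B ∧ MeasurableSet C ∧ Ψ ⁻¹' B ∩ Θ ⁻¹' C = s} with hp2def
  have hmeas_p1 : ∀ s ∈ p1, MeasurableSet s := by
    rintro s ⟨t, ht, rfl⟩; exact hUmeas i ht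
  have hmeas_p2 : ∀ s ∈ p2, MeasurableSet s := by
    rintro s ⟨B, C, hB, hC, rfl⟩; exact (hΨmeas hB).inter (hΘmeas hC)
  have hpi1 : IsPiSystem p1 := by
    rintro s ⟨t1, ht1, rfl⟩ s' ⟨t2, ht2, rfl⟩ _
    exact ⟨t1 ∩ t2, ht1.inter ht2, by rw [Set.preimage_inter]⟩
  have hpi2 : IsPiSystem p2 := by
    rintro s ⟨B1, C1, hB1, hC1, rfl⟩ s' ⟨B2, C2, hB2, hC2, rfl⟩ _
    refine ⟨B1 ∩ B2, C1 ∩ C2, hB1.inter hB2, hC1.inter hC2, ?_⟩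
    rw [Set.preimage_inter, Set.preimage_inter]
    ext ω; simp only [Set.mem_inter_iff]; tauto
  have hind : IndepSets p1 p2 μ := by
    rw [IndepSets_iff]
    rintro s s' ⟨t, ht, rfl⟩ ⟨B, C, hB, hC, rfl⟩
    have hD : MeasurableSet ((fun u : Fin n → ℝ => u i) ⁻¹' t ∩ r ⁻¹' B) :=
      ((measurable_pi_apply i) ht).inter (hrmeas hB)
    have h1 : U i ⁻¹' t ∩ Ψ ⁻¹' B
        = (fun ω => fun j => U j ω) ⁻¹' ((fun u : Fin n → ℝ => u i) ⁻¹' t ∩ r ⁻¹' B) := rfl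
    have h2 : μ (U i ⁻¹' t ∩ (Ψ ⁻¹' B ∩ Θ ⁻¹' C))
        = μ (U i ⁻¹' t ∩ Ψ ⁻¹' B) * μ (Θ ⁻¹' C) := by
      rw [← Set.inter_assoc, h1]
      exact hUHξ.meas_inter ⟨_, hD, rfl⟩ ⟨_, hC, rfl⟩
    have h3 : μ (U i ⁻¹' t ∩ Ψ ⁻¹' B) = μ (U i ⁻¹' t) * μ (Ψ ⁻¹' B) :=
      hUiΨ.meas_inter ⟨t, ht, rfl⟩ ⟨B, hB, rfl⟩
    have h4 : μ (Ψ ⁻¹' B ∩ Θ ⁻¹' C) = μ (Ψ ⁻¹' B) * μ (Θ ⁻¹' C) :=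
      hΨΘ.meas_inter ⟨B, hB, rfl⟩ ⟨C, hC, rfl⟩
    rw [h2, h3, h4]; ring
  have hIndep := IndepSets.indep' hmeas_p1 hmeas_p2 hpi1 hpi2 hind
  rw [IndepFun_iff_Indep]
  have hle1 : MeasurableSpace.comap (U i) inferInstance ≤ MeasurableSpace.generateFrom p1 := by
    intro s hs
    exact MeasurableSpace.measurableSet_generateFrom hs
  have hΨle : MeasurableSpace.comap Ψ inferInstance ≤ MeasurableSpace.generateFrom p2 := by
    rintro s ⟨B, hB, rfl⟩
    exact MeasurableSpace.measurableSet_generateFrom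
      ⟨B, Set.univ, hB, MeasurableSet.univ, by simp⟩
  have hΘle : MeasurableSpace.comap Θ inferInstance ≤ MeasurableSpace.generateFrom p2 := by
    rintro s ⟨C, hC, rfl⟩
    exact MeasurableSpace.measurableSet_generateFrom
      ⟨Set.univ, C, MeasurableSet.univ, hC, by simp⟩
  have hle2 : MeasurableSpace.comap (fun ω => (Ψ ω, Θ ω)) inferInstance
      ≤ MeasurableSpace.generateFrom p2 := by
    have hΦ : Measurable[MeasurableSpace.generateFrom p2] (fun ω => (Ψ ω, Θ ω)) :=
      Measurable.prodMk (Measurable.of_comap_le hΨle) (Measurable.of_comap_le hΘle)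
    exact measurable_iff_comap_le.mp hΦ
  exact indep_of_indep_of_le_right (indep_of_indep_of_le_left hIndep hle1) hle2


/-- Leave-one-out identity: under the BI model, for an estimator `n̂₀ = e(p) > 0` that is
a measurable function of `(F̂_n(t))_{t ≥ λ}`,
`(1/λ)·E[V(λ)/n̂₀] = E[Σ_{i : H_i = 0} 1/n̂₀⁽ⁱ⁾]`, where `n̂₀⁽ⁱ⁾ = e(p⁽ⁱ⁾)` with the
`i`-th p-value replaced by `0`. -/
theorem leave_one_out_identity {Ω : Type*} [MeasurableSpace Ω]
    (μ : Measure Ω) [IsProbabilityMeasure μ] {m : ℕ}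
    (H : Fin (m + 1) → Ω → Bool) (U ξ : Fin (m + 1) → Ω → ℝ)
    (hUmeas : ∀ i, Measurable (U i)) (hξmeas : ∀ i, Measurable (ξ i))
    (hHmeas : ∀ i, Measurable (H i))
    (hUindep : iIndepFun U μ)
    (hUHξ : IndepFun (fun ω => fun i => U i ω)
      (fun ω => ((fun i => H i ω), (fun i => ξ i ω))) μ)
    (hunif : ∀ i, Measure.map (U i) μ = volume.restrict (Set.Ioo (0 : ℝ) 1))
    (hξrange : ∀ i ω, ξ i ω ∈ Set.Icc (0 : ℝ) 1)
    (lam : ℝ) (hlam : lam ∈ Set.Ioo (0 : ℝ) 1)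
    (e : (Fin (m + 1) → ℝ) → ℝ) (hemeas : Measurable e) (hepos : ∀ q, 0 < e q)
    (hecdf : ∀ q q' : Fin (m + 1) → ℝ,
      (∀ t, lam ≤ t → countLe q t = countLe q' t) → e q = e q') :
    (1 / lam) *
      ∫ ω,
        (((Finset.univ.filter fun i : Fin (m + 1) =>
            (if H i ω then ξ i ω else U i ω) ≤ lam ∧ H i ω = false).card : ℝ)
          / e (fun i => if H i ω then ξ i ω else U i ω)) ∂μ
    = ∫ ω,
        (∑ i ∈ Finset.univ.filter fun i : Fin (m + 1) => H i ω = false,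
          1 / e (Function.update (fun j => if H j ω then ξ j ω else U j ω) i 0)) ∂μ := by
  classical
  obtain ⟨hlam0, hlam1⟩ := hlam
  set q : Fin (m + 1) → Ω → Fin (m + 1) → ℝ :=
    fun i ω j => if hj : j = i then 0 else if H j ω then ξ j ω else U j ω with hqdef
  have hqmeas : ∀ i, Measurable (q i) := by
    intro i
    apply measurable_pi_lambda
    intro j
    by_cases hj : j = i
    · simp only [hqdef, dif_pos hj]; exact measurable_const
    · simp only [hqdef, dif_neg hj]
      exact Measurable.ite ((hHmeas j) (measurableSet_singleton true)) (hξmeas j) (hUmeas j)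
  have hupdate : ∀ (i : Fin (m + 1)) (ω : Ω),
      Function.update (fun j => if H j ω then ξ j ω else U j ω) i 0 = q i ω := by
    intro i ω
    funext j
    rcases eq_or_ne j i with hj | hj
    · subst hj; simp [hqdef]
    · simp [hqdef, hj, Function.update_of_ne hj]
  have hequpd : ∀ (i : Fin (m + 1)) (ω : Ω),
      (if H i ω then ξ i ω else U i ω) ≤ lam →
      e (fun j => if H j ω then ξ j ω else U j ω) = e (q i ω) := by
    intro i ω h
    refine hecdf _ _ fun t ht => ?_
    exact (countLe_dite (fun j => H j ω) (fun j => U j ω) (fun j => ξ j ω) i hlam0 h ht).symm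
  set ℓ : Fin (m + 1) → Ω → ℝ := fun i ω =>
    (if (if H i ω then ξ i ω else U i ω) ≤ lam ∧ H i ω = false then (1:ℝ) else 0)
      / e (q i ω) with hldef
  have hA : ∀ ω : Ω,
      (((Finset.univ.filter fun i : Fin (m + 1) =>
          (if H i ω then ξ i ω else U i ω) ≤ lam ∧ H i ω = false).card : ℝ)
        / e (fun i => if H i ω then ξ i ω else U i ω)) = ∑ i, ℓ i ω := by
    intro ω
    rw [Finset.card_filter]
    push_cast
    rw [Finset.sum_div]
    refine Finset.sum_congr rfl fun i _ => ?_
    simp only [hldef]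
    by_cases h : (if H i ω then ξ i ω else U i ω) ≤ lam ∧ H i ω = false
    · rw [if_pos h, hequpd i ω h.1]
    · rw [if_neg h]
      simp [zero_div]
  set Rf : Ω → ℝ := fun ω => ∑ i, if H i ω = false then 1 / e (q i ω) else 0 with hRfdef
  have hB : ∀ ω : Ω,
      (∑ i ∈ Finset.univ.filter fun i : Fin (m + 1) => H i ω = false,
        1 / e (Function.update (fun j => if H j ω then ξ j ω else U j ω) i 0)) = Rf ω := by
    intro ω
    rw [Finset.sum_filter]
    refine Finset.sum_congr rfl fun i _ => ?_
    rw [hupdate i ω]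
  -- ENNReal-valued factors
  set X : Fin (m + 1) → Ω → ℝ≥0∞ := fun i ω => if U i ω ≤ lam then 1 else 0 with hXdef
  set Y : Fin (m + 1) → Ω → ℝ≥0∞ := fun i ω =>
    if H i ω = false then (ENNReal.ofReal (e (q i ω)))⁻¹ else 0 with hYdef
  have heqmeas : ∀ i, Measurable fun ω => e (q i ω) := fun i => hemeas.comp (hqmeas i)
  have hXmeas : ∀ i, Measurable (X i) := by
    intro i
    exact Measurable.ite ((hUmeas i) measurableSet_Iic) measurable_const measurable_const
  have hYmeas : ∀ i, Measurable (Y i) := by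
    intro i
    exact Measurable.ite ((hHmeas i) (measurableSet_singleton false))
      ((ENNReal.measurable_ofReal.comp (heqmeas i)).inv) measurable_const
  have hXY : ∀ (i : Fin (m + 1)) (ω : Ω), ENNReal.ofReal (ℓ i ω) = X i ω * Y i ω := by
    intro i ω
    simp only [hldef, hXdef, hYdef]
    rcases Bool.eq_false_or_eq_true (H i ω) with hH | hH
    · simp only [hH, Bool.true_eq_false, and_false, if_false, zero_div,
        ENNReal.ofReal_zero, mul_zero]
    · simp only [hH, Bool.false_eq_true, if_false, and_true, if_true]
      by_cases hU : U i ω ≤ lam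
      · rw [if_pos hU, if_pos hU, one_div, ENNReal.ofReal_inv_of_pos (hepos _), one_mul]
      · rw [if_neg hU, if_neg hU, zero_div, ENNReal.ofReal_zero, zero_mul]
  have hYsum : ∀ ω : Ω, ENNReal.ofReal (Rf ω) = ∑ i, Y i ω := by
    intro ω
    simp only [hRfdef, hYdef]
    rw [ENNReal.ofReal_sum_of_nonneg]
    · refine Finset.sum_congr rfl fun i _ => ?_
      by_cases hH : H i ω = false
      · rw [if_pos hH, if_pos hH, one_div, ENNReal.ofReal_inv_of_pos (hepos _)]
      · rw [if_neg hH, if_neg hH, ENNReal.ofReal_zero]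
    · intro i _
      by_cases hH : H i ω = false
      · rw [if_pos hH]; exact div_nonneg zero_le_one (hepos _).le
      · rw [if_neg hH]
  have hite01 : ∀ (c : Prop) (inst : Decidable c), 0 ≤ (if c then (1:ℝ) else 0) := by
    intro c inst; split <;> norm_num
  -- independence of X i and Y i
  have hIndep : ∀ i, IndepFun (X i) (Y i) μ := by
    intro i
    have hbase := indep_aux μ H U ξ hUmeas hξmeas hHmeas hUindep hUHξ i
    have hφ : Measurable fun t : ℝ => if t ≤ lam then (1 : ℝ≥0∞) else 0 :=
      Measurable.ite measurableSet_Iic measurable_const measurable_const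
    have hG2 : Measurable fun v : (({j : Fin (m + 1) // j ≠ i} → ℝ) ×
        ((Fin (m + 1) → Bool) × (Fin (m + 1) → ℝ))) =>
        e (fun j => if hj : j = i then 0
          else if v.2.1 j then v.2.2 j else v.1 ⟨j, hj⟩) := by
      refine hemeas.comp (measurable_pi_lambda _ fun j => ?_)
      by_cases hj : j = i
      · simp only [dif_pos hj]; exact measurable_const
      · simp only [dif_neg hj]
        have hc : Measurable fun v : (({j : Fin (m + 1) // j ≠ i} → ℝ) ×
            ((Fin (m + 1) → Bool) × (Fin (m + 1) → ℝ))) => v.2.1 j :=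
          (measurable_pi_apply j).comp (measurable_fst.comp measurable_snd)
        have hx : Measurable fun v : (({j : Fin (m + 1) // j ≠ i} → ℝ) ×
            ((Fin (m + 1) → Bool) × (Fin (m + 1) → ℝ))) => v.2.2 j :=
          (measurable_pi_apply j).comp (measurable_snd.comp measurable_snd)
        have hu : Measurable fun v : (({j : Fin (m + 1) // j ≠ i} → ℝ) ×
            ((Fin (m + 1) → Bool) × (Fin (m + 1) → ℝ))) => v.1 ⟨j, hj⟩ :=
          (measurable_pi_apply _).comp measurable_fst
        exact Measurable.ite (hc (measurableSet_singleton true)) hx hu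
    have hGmeas : Measurable fun v : (({j : Fin (m + 1) // j ≠ i} → ℝ) ×
        ((Fin (m + 1) → Bool) × (Fin (m + 1) → ℝ))) =>
        if v.2.1 i = false then (ENNReal.ofReal (e (fun j => if hj : j = i then 0
          else if v.2.1 j then v.2.2 j else v.1 ⟨j, hj⟩)))⁻¹ else 0 := by
      have hc : Measurable fun v : (({j : Fin (m + 1) // j ≠ i} → ℝ) ×
          ((Fin (m + 1) → Bool) × (Fin (m + 1) → ℝ))) => v.2.1 i :=
        (measurable_pi_apply i).comp (measurable_fst.comp measurable_snd)
      exact Measurable.ite (hc (measurableSet_singleton false))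
        ((ENNReal.measurable_ofReal.comp hG2).inv) measurable_const
    exact hbase.comp hφ hGmeas
  -- the integral of X i
  have hXint : ∀ i, ∫⁻ ω, X i ω ∂μ = ENNReal.ofReal lam := by
    intro i
    have h1 : ∀ ω, X i ω = (U i ⁻¹' Set.Iic lam).indicator (1 : Ω → ℝ≥0∞) ω := by
      intro ω
      simp only [hXdef, Set.indicator_apply, Set.mem_preimage, Set.mem_Iic, Pi.one_apply]
    rw [lintegral_congr h1, lintegral_indicator_one ((hUmeas i) measurableSet_Iic)]
    rw [← Measure.map_apply (hUmeas i) measurableSet_Iic, hunif i,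
      Measure.restrict_apply measurableSet_Iic]
    have h3 : Set.Iic lam ∩ Set.Ioo (0 : ℝ) 1 = Set.Ioc 0 lam := by
      ext x
      simp only [Set.mem_inter_iff, Set.mem_Iic, Set.mem_Ioo, Set.mem_Ioc]
      constructor
      · rintro ⟨hx1, hx2, _⟩; exact ⟨hx2, hx1⟩
      · rintro ⟨hx1, hx2⟩; exact ⟨hx2, hx1, lt_of_le_of_lt hx2 hlam1⟩
    rw [h3, Real.volume_Ioc]
    norm_num
  -- nonnegativity and measurability of the real integrands
  have hpim : ∀ i, Measurable fun ω => if H i ω then ξ i ω else U i ω := fun i =>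
    Measurable.ite ((hHmeas i) (measurableSet_singleton true)) (hξmeas i) (hUmeas i)
  have hlmeas : ∀ i, Measurable (ℓ i) := by
    intro i
    apply Measurable.div _ (heqmeas i)
    exact Measurable.ite
      (MeasurableSet.inter ((hpim i) measurableSet_Iic)
        ((hHmeas i) (measurableSet_singleton false)))
      measurable_const measurable_const
  have hLmeas : Measurable fun ω => ∑ i, ℓ i ω :=
    Finset.measurable_sum _ fun i _ => hlmeas i
  have hRmeas : Measurable Rf := by
    rw [hRfdef]
    apply Finset.measurable_sum
    intro i _
    exact Measurable.ite ((hHmeas i) (measurableSet_singleton false))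
      (measurable_const.div (heqmeas i)) measurable_const
  have hLnn : 0 ≤ᵐ[μ] fun ω => ∑ i, ℓ i ω := by
    refine Filter.Eventually.of_forall fun ω => Finset.sum_nonneg fun i _ => ?_
    simp only [hldef]
    exact div_nonneg (hite01 _ _) (hepos _).le
  have hRnn : 0 ≤ᵐ[μ] Rf := by
    refine Filter.Eventually.of_forall fun ω => Finset.sum_nonneg fun i _ => ?_
    split
    · exact div_nonneg zero_le_one (hepos _).le
    · exact le_refl 0
  -- main lintegral identity
  have key : ∫⁻ ω, ENNReal.ofReal (∑ i, ℓ i ω) ∂μ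
      = ENNReal.ofReal lam * ∫⁻ ω, ENNReal.ofReal (Rf ω) ∂μ := by
    calc ∫⁻ ω, ENNReal.ofReal (∑ i, ℓ i ω) ∂μ
        = ∫⁻ ω, ∑ i, X i ω * Y i ω ∂μ := by
          refine lintegral_congr fun ω => ?_
          rw [ENNReal.ofReal_sum_of_nonneg]
          · exact Finset.sum_congr rfl fun i _ => hXY i ω
          · intro i _
            simp only [hldef]
            exact div_nonneg (hite01 _ _) (hepos _).le
      _ = ∑ i, ∫⁻ ω, X i ω * Y i ω ∂μ :=
          lintegral_finset_sum _ fun i _ => (hXmeas i).mul (hYmeas i)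
      _ = ∑ i, (∫⁻ ω, X i ω ∂μ) * ∫⁻ ω, Y i ω ∂μ :=
          Finset.sum_congr rfl fun i _ =>
            lintegral_mul_eq_lintegral_mul_lintegral_of_indepFun''
              (hXmeas i).aemeasurable (hYmeas i).aemeasurable (hIndep i)
      _ = ∑ i, ENNReal.ofReal lam * ∫⁻ ω, Y i ω ∂μ :=
          Finset.sum_congr rfl fun i _ => by rw [hXint i]
      _ = ENNReal.ofReal lam * ∑ i, ∫⁻ ω, Y i ω ∂μ := by rw [Finset.mul_sum]
      _ = ENNReal.ofReal lam * ∫⁻ ω, ∑ i, Y i ω ∂μ := by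
          rw [lintegral_finset_sum _ fun i _ => hYmeas i]
      _ = ENNReal.ofReal lam * ∫⁻ ω, ENNReal.ofReal (Rf ω) ∂μ := by
          rw [lintegral_congr hYsum]
  -- assembling
  calc (1 / lam) * ∫ ω,
        (((Finset.univ.filter fun i : Fin (m + 1) =>
            (if H i ω then ξ i ω else U i ω) ≤ lam ∧ H i ω = false).card : ℝ)
          / e (fun i => if H i ω then ξ i ω else U i ω)) ∂μ
      = (1 / lam) * ∫ ω, ∑ i, ℓ i ω ∂μ := by
        rw [integral_congr_ae (Filter.Eventually.of_forall hA)]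
    _ = (1 / lam) * (∫⁻ ω, ENNReal.ofReal (∑ i, ℓ i ω) ∂μ).toReal := by
        rw [integral_eq_lintegral_of_nonneg_ae hLnn hLmeas.aestronglyMeasurable]
    _ = (∫⁻ ω, ENNReal.ofReal (Rf ω) ∂μ).toReal := by
        rw [key, ENNReal.toReal_mul, ENNReal.toReal_ofReal hlam0.le, ← mul_assoc,
          one_div, inv_mul_cancel₀ (ne_of_gt hlam0), one_mul]
    _ = ∫ ω, Rf ω ∂μ := by
        rw [integral_eq_lintegral_of_nonneg_ae hRnn hRmeas.aestronglyMeasurable]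
    _ = ∫ ω, (∑ i ∈ Finset.univ.filter fun i : Fin (m + 1) => H i ω = false,
          1 / e (Function.update (fun j => if H j ω then ξ j ω else U j ω) i 0)) ∂μ := by
        rw [integral_congr_ae (Filter.Eventually.of_forall fun ω => (hB ω).symm)]
end

section
/- Let p = (p_1,...,p_n) with p_1 ∈ [0,1] and p^{(1)} = (0, p_2,...,p_n). For the step-up test with nondecreasing deterministic critical values 0 < α_{1:n} ≤ ... ≤ α_{n:n} < 1 and R(p) = max{i : p_{i:n} ≤ α_{i:n}}, it holds that: (i) R(p) = R(p^{(1)}) on the event {p_1 ≤ α_{R(p):n}}, and (ii) {p_1 ≤ α_{R(p):n}} = {p_1 ≤ α_{R(p^{(1)}):n}}. -/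
open MeasureTheory ProbabilityTheory Finset
open scoped Classical

/-- Leave-one-out stability of the step-up count: with `p⁽¹⁾ = (0, p_2, …, p_n)`,
(i) `R(p) = R(p⁽¹⁾)` on `{p_1 ≤ α_{R(p):n}}` and (ii) `{p_1 ≤ α_{R(p):n}} = {p_1 ≤ α_{R(p⁽¹⁾):n}}`. -/
theorem stepUp_leave_one_out {m : ℕ} (c : Fin (m + 1) → ℝ) (hmono : Monotone c)
    (hc0 : 0 < c 0) (hc1 : c (Fin.last m) < 1)
    (p : Fin (m + 1) → ℝ) (hp : p 0 ∈ Set.Icc (0 : ℝ) 1) :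
    (p 0 ≤ threshold c (suCount c p) →
      suCount c p = suCount c (Function.update p 0 0)) ∧
    (p 0 ≤ threshold c (suCount c p) ↔
      p 0 ≤ threshold c (suCount c (Function.update p 0 0))) := by
  classical
  set p' := Function.update p 0 0 with hp'def
  have hp'0 : p' 0 = 0 := Function.update_self _ _ _
  have hple : ∀ i, p' i ≤ p i := by
    intro i
    by_cases h : i = 0
    · subst h; rw [hp'0]; exact hp.1
    · rw [hp'def, Function.update_of_ne h]
  have hcpos : ∀ k : Fin (m+1), 0 < c k :=
    fun k => lt_of_lt_of_le hc0 (hmono (Fin.zero_le k))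
  have hcountle : ∀ t, countLe p t ≤ countLe p' t := by
    intro t
    apply Finset.card_le_card
    intro i hi
    simp only [Finset.mem_filter, Finset.mem_univ, true_and] at *
    exact le_trans (hple i) hi
  have hcounteq : ∀ t, 0 ≤ t → p 0 ≤ t → countLe p' t = countLe p t := by
    intro t ht hpt
    unfold countLe
    congr 1
    apply Finset.filter_congr
    intro i _
    by_cases h : i = 0
    · subst h; rw [hp'0]; simp [ht, hpt]
    · rw [hp'def, Function.update_of_ne h]
  set R := suCount c p with hR
  set R' := suCount c p' with hR'
  have hRle : R ≤ R' := by
    rw [hR, hR', suCount, suCount]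
    apply Finset.sup_mono
    intro k hk
    simp only [Finset.mem_filter, Finset.mem_univ, true_and] at *
    exact le_trans hk (hcountle (c k))
  have hRn : R ≤ m + 1 := Finset.sup_le fun k _ => k.2
  have hR'n : R' ≤ m + 1 := Finset.sup_le fun k _ => k.2
  have hzero : p 0 = 0 → R = R' := by
    intro h0
    have : p' = p := by
      funext i
      by_cases hi : i = 0
      · subst hi; rw [hp'0, h0]
      · rw [hp'def, Function.update_of_ne hi]
    rw [hR, hR', this]
  have key : p 0 ≤ threshold c R → R = R' := by
    intro h
    rcases Nat.eq_zero_or_pos R with h0 | h0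
    · have ht0 : threshold c R = 0 := by simp [threshold, h0]
      exact hzero (le_antisymm (ht0 ▸ h) hp.1)
    · have ht : threshold c R = c ⟨R - 1, by omega⟩ := by
        rw [threshold, dif_pos ⟨h0, hRn⟩]
      rw [ht] at h
      refine le_antisymm hRle ?_
      rw [hR', suCount]
      apply Finset.sup_le
      intro k hk
      simp only [Finset.mem_filter, Finset.mem_univ, true_and] at hk
      by_cases hk1 : k.1 + 1 ≤ R
      · exact hk1
      · have hle : (⟨R - 1, by omega⟩ : Fin (m+1)) ≤ k := by
          simp only [Fin.mk_le_mk, Fin.le_def]; omega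
        have hpk : p 0 ≤ c k := le_trans h (hmono hle)
        have := hcounteq (c k) (le_of_lt (hcpos k)) hpk
        rw [this] at hk
        have : k.1 + 1 ≤ R := by
          rw [hR, suCount]
          exact Finset.le_sup (f := fun k : Fin (m+1) => k.1 + 1)
            (Finset.mem_filter.mpr ⟨Finset.mem_univ k, hk⟩)
        exact this
  have key2 : p 0 ≤ threshold c R' → R = R' := by
    intro h
    rcases Nat.eq_zero_or_pos R' with h0 | h0
    · have ht0 : threshold c R' = 0 := by simp [threshold, h0]
      exact hzero (le_antisymm (ht0 ▸ h) hp.1)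
    · have hne : (Finset.univ.filter fun k : Fin (m+1) =>
          k.1 + 1 ≤ countLe p' (c k)).Nonempty := by
        by_contra hne
        rw [Finset.not_nonempty_iff_eq_empty] at hne
        have : R' = 0 := by rw [hR', suCount, hne]; simp
        omega
      obtain ⟨k, hkmem, hksup⟩ :=
        Finset.exists_mem_eq_sup _ hne (fun k : Fin (m+1) => k.1 + 1)
      have hkR' : R' = k.1 + 1 := by rw [hR', suCount]; exact hksup
      simp only [Finset.mem_filter, Finset.mem_univ, true_and] at hkmem
      have ht : threshold c R' = c k := by
        rw [threshold, dif_pos ⟨h0, hR'n⟩]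
        congr 1
        ext
        simp [hkR']
      rw [ht] at h
      have := hcounteq (c k) (le_of_lt (hcpos k)) h
      rw [this] at hkmem
      have hRk : k.1 + 1 ≤ R := by
        rw [hR, suCount]
        exact Finset.le_sup (f := fun k : Fin (m+1) => k.1 + 1)
          (Finset.mem_filter.mpr ⟨Finset.mem_univ k, hkmem⟩)
      omega
  refine ⟨key, ?_, ?_⟩
  · intro h; rw [← key h]; exact h
  · intro h; rw [key2 h]; exact h
end

section
/- Let p = (p_1,...,p_n) and p^{(1)} = (0, p_2,...,p_n), and for nondecreasing critical values 0 < α_{1:n} ≤ ... ≤ α_{n:n} < 1 define the step-down count R_SD(p) = max{i : p_{j:n} ≤ α_{j:n} for all j ≤ i} (max∅ = 0). Then R_SD(p) = R_SD(p^{(1)}) on {p_1 ≤ α_{R_SD(p):n}}, and {p_1 ≤ α_{R_SD(p):n}} ⊆ {p_1 ≤ α_{R_SD(p^{(1)}):n}}. -/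
open MeasureTheory ProbabilityTheory Finset
open scoped Classical

lemma countLe_mono_p {n : ℕ} {p q : Fin n → ℝ} (h : ∀ i, q i ≤ p i) (t : ℝ) :
    countLe p t ≤ countLe q t := by
  apply Finset.card_le_card
  intro i hi
  simp only [Finset.mem_filter, Finset.mem_univ, true_and] at *
  exact le_trans (h i) hi

/-- Leave-one-out stability of the step-down count: with `p⁽¹⁾ = (0, p_2, …, p_n)`,
`R_SD(p) = R_SD(p⁽¹⁾)` on `{p_1 ≤ α_{R_SD(p):n}}`, and
`{p_1 ≤ α_{R_SD(p):n}} ⊆ {p_1 ≤ α_{R_SD(p⁽¹⁾):n}}`. -/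
theorem stepDown_leave_one_out {m : ℕ} (c : Fin (m + 1) → ℝ) (hmono : Monotone c)
    (hc0 : 0 < c 0) (hc1 : c (Fin.last m) < 1)
    (p : Fin (m + 1) → ℝ) (hp : p 0 ∈ Set.Icc (0 : ℝ) 1) :
    (p 0 ≤ threshold c (sdCount c p) →
      sdCount c p = sdCount c (Function.update p 0 0)) ∧
    (p 0 ≤ threshold c (sdCount c p) →
      p 0 ≤ threshold c (sdCount c (Function.update p 0 0))) := by
  set p' := Function.update p 0 0 with hp'def
  have hple : ∀ i, p' i ≤ p i := by
    intro i
    by_cases h : i = 0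
    · subst h; simp [hp'def, hp.1]
    · simp [hp'def, Function.update_of_ne h]
  have hcount_le : ∀ t, countLe p t ≤ countLe p' t := fun t => countLe_mono_p hple t
  have hR'ge : sdCount c p ≤ sdCount c p' := by
    apply Finset.sup_mono
    intro k hk
    simp only [Finset.mem_filter, Finset.mem_univ, true_and] at *
    exact fun j hj => le_trans (hk j hj) (hcount_le (c j))
  have hsd_le : ∀ q : Fin (m + 1) → ℝ, sdCount c q ≤ m + 1 := by
    intro q
    apply Finset.sup_le
    intro k _
    exact k.2
  have main : p 0 ≤ threshold c (sdCount c p) → sdCount c p = sdCount c p' := by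
    intro h
    rcases Nat.eq_zero_or_pos (sdCount c p) with h0 | hpos
    · have hth : threshold c (sdCount c p) = 0 := by
        rw [h0]; simp [threshold]
      rw [hth] at h
      have hp0 : p 0 = 0 := le_antisymm h hp.1
      have hpp : p' = p := by rw [hp'def, ← hp0, Function.update_eq_self]
      rw [hpp]
    · set R := sdCount c p with hRdef
      have hRle : R ≤ m + 1 := hsd_le p
      -- sup is attained
      have hne : (Finset.univ.filter fun k : Fin (m + 1) =>
          ∀ j : Fin (m + 1), j ≤ k → j.1 + 1 ≤ countLe p (c j)).Nonempty := by
        by_contra hemp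
        rw [Finset.not_nonempty_iff_eq_empty] at hemp
        have : R = 0 := by rw [hRdef, sdCount, hemp]; simp
        omega
      obtain ⟨k0, hk0mem, hk0⟩ := Finset.exists_mem_eq_sup _ hne (fun k : Fin (m + 1) => k.1 + 1)
      simp only [Finset.mem_filter, Finset.mem_univ, true_and] at hk0mem
      have hvalid : ∀ j : Fin (m + 1), j.1 + 1 ≤ R → j.1 + 1 ≤ countLe p (c j) := by
        intro j hj
        apply hk0mem
        rw [Fin.le_def]
        have : R = k0.1 + 1 := hk0
        omega
      by_cases hRm : R = m + 1
      · have := hsd_le p'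
        omega
      · have hRlt : R < m + 1 := by omega
        set kR : Fin (m + 1) := ⟨R, hRlt⟩ with hkR
        have hfail : countLe p (c kR) < R + 1 := by
          by_contra hge
          push_neg at hge
          have hmem : kR ∈ Finset.univ.filter fun k : Fin (m + 1) =>
              ∀ j : Fin (m + 1), j ≤ k → j.1 + 1 ≤ countLe p (c j) := by
            simp only [Finset.mem_filter, Finset.mem_univ, true_and]
            intro j hj
            rw [Fin.le_def] at hj
            rcases Nat.lt_or_ge j.1 R with hlt | hgt
            · exact hvalid j (by omega)
            · have hj' : j.1 ≤ R := hj
              have : j = kR := by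
                apply Fin.ext; show j.1 = R; omega
              rw [this]; exact hge
          have h2 := Finset.le_sup (f := fun k : Fin (m + 1) => k.1 + 1) hmem
          rw [← sdCount, ← hRdef] at h2
          have h3 : R + 1 ≤ R := h2
          omega
        have hth : threshold c R = c ⟨R - 1, by omega⟩ := by
          rw [threshold, dif_pos ⟨hpos, hRle⟩]
        rw [hth] at h
        have hpc : p 0 ≤ c kR :=
          le_trans h (hmono (show (⟨R - 1, by omega⟩ : Fin (m + 1)) ≤ kR by
            rw [Fin.le_def]; show R - 1 ≤ R; omega))
        have hcount_eq : countLe p' (c kR) = countLe p (c kR) := by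
          unfold countLe
          congr 1
          apply Finset.filter_congr
          intro i _
          by_cases hi : i = 0
          · subst hi
            simp only [hp'def, Function.update_self]
            constructor
            · intro; exact hpc
            · intro; exact le_trans hp.1 hpc
          · simp [hp'def, Function.update_of_ne hi]
        have hle' : sdCount c p' ≤ R := by
          apply Finset.sup_le
          intro k hk
          simp only [Finset.mem_filter, Finset.mem_univ, true_and] at hk
          by_contra hgt
          push_neg at hgt
          have hkRk : kR ≤ k := by rw [Fin.le_def]; show R ≤ k.1; omega
          have h2 : R + 1 ≤ countLe p' (c kR) := hk kR hkRk
          rw [hcount_eq] at h2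
          omega
        omega
  exact ⟨main, fun h => by rw [← main h]; exact h⟩
end

section
/- Let U be uniform(0,1), independent of a positive random variable X and of a nonnegative integer-valued random variable R, where X and R are measurable functions of other data. Then for any λ ∈ (0,1], E[1{U ≤ λ}/X] = λ·E[1/X] whenever U is independent of X. More specifically, in the BI Model with N_0 = n_0 > 0 fixed and true p-values p_1,...,p_{n_0} exchangeable, E[V(λ)/n̂_0] = n_0·E[1{p_1 ≤ λ}/n̂_0] = λ·E[n_0/n̂_0^{(1)}], where n̂_0^{(1)} = n̂_0(p^{(1)}) is the estimator with p_1 set to 0. -/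
open MeasureTheory ProbabilityTheory Finset
open scoped Classical

open scoped ENNReal

private lemma aux_unif_prob : IsProbabilityMeasure (volume.restrict (Set.Ioo (0:ℝ) 1)) :=
  ⟨by rw [Measure.restrict_apply_univ]; simp [Real.volume_Ioo]⟩

private lemma aux_unif_Iic {lam : ℝ} (hlam : lam ∈ Set.Ioc (0:ℝ) 1) :
    (volume.restrict (Set.Ioo (0:ℝ) 1)) (Set.Iic lam) = ENNReal.ofReal lam := by
  rw [Measure.restrict_apply measurableSet_Iic]
  apply le_antisymm
  · calc volume (Set.Iic lam ∩ Set.Ioo 0 1) ≤ volume (Set.Ioc 0 lam) := by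
          apply measure_mono; rintro x ⟨h1, h2, _⟩; exact ⟨h2, h1⟩
      _ = ENNReal.ofReal lam := by rw [Real.volume_Ioc]; simp
  · calc ENNReal.ofReal lam = volume (Set.Ioo 0 lam) := by rw [Real.volume_Ioo]; simp
      _ ≤ volume (Set.Iic lam ∩ Set.Ioo 0 1) := by
          apply measure_mono; rintro x ⟨h1, h2⟩
          exact ⟨h2.le, h1, lt_of_lt_of_le h2 hlam.2⟩

private lemma aux_lint_if {lam : ℝ} (hlam : lam ∈ Set.Ioc (0:ℝ) 1) :
    ∫⁻ a, (if a ≤ lam then (1:ℝ≥0∞) else 0) ∂(volume.restrict (Set.Ioo (0:ℝ) 1))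
      = ENNReal.ofReal lam := by
  have : ∀ a : ℝ, (if a ≤ lam then (1:ℝ≥0∞) else 0)
      = Set.indicator (Set.Iic lam) (1 : ℝ → ℝ≥0∞) a := by
    intro a; simp [Set.indicator_apply, Set.mem_Iic]
  simp_rw [this]
  rw [lintegral_indicator_one measurableSet_Iic, aux_unif_Iic hlam]

private lemma aux_map_pi_comp_perm {n : ℕ} (ρ : Measure ℝ) [IsProbabilityMeasure ρ]
    (σ : Equiv.Perm (Fin n)) :
    (Measure.pi fun _ : Fin n => ρ).map (fun u => u ∘ σ) = Measure.pi fun _ : Fin n => ρ := by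
  have hm : Measurable (fun u : Fin n → ℝ => u ∘ σ) :=
    measurable_pi_iff.2 fun i => measurable_pi_apply (σ i)
  refine (Measure.pi_eq fun s hs => ?_).symm
  rw [Measure.map_apply hm (MeasurableSet.univ_pi hs)]
  have hpre : (fun u : Fin n → ℝ => u ∘ σ) ⁻¹' Set.univ.pi s
      = Set.univ.pi fun j => s (σ.symm j) := by
    ext u
    simp only [Set.mem_preimage, Set.mem_univ_pi, Function.comp]
    constructor
    · intro h j; simpa using h (σ.symm j)
    · intro h j; simpa using h (σ j)
  rw [hpre, Measure.pi_pi]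
  exact Equiv.prod_comp σ.symm fun i => ρ (s i)

/-- the p-value vector built from a pair (true values, false values). -/
private def Pz (n₀ : ℕ) {m : ℕ} (z : (Fin (m+1) → ℝ) × (Fin (m+1) → ℝ)) : Fin (m+1) → ℝ :=
  fun i => if (i : ℕ) < n₀ then z.1 i else z.2 i

private lemma Pz_meas (n₀ : ℕ) {m : ℕ} : Measurable (Pz n₀ (m := m)) := by
  refine measurable_pi_iff.2 fun i => ?_
  by_cases h : (i : ℕ) < n₀
  · simpa [Pz, h, Function.comp_def] using (measurable_pi_apply i).comp measurable_fst
  · simpa [Pz, h, Function.comp_def] using (measurable_pi_apply i).comp measurable_snd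

private lemma Pz_apply_lt {n₀ : ℕ} {m : ℕ} {i : Fin (m+1)} (hi : (i : ℕ) < n₀)
    (z : (Fin (m+1) → ℝ) × (Fin (m+1) → ℝ)) : Pz n₀ z i = z.1 i := if_pos hi

private lemma Pz_swap {n₀ : ℕ} {m : ℕ} (hn₀ : 1 ≤ n₀) {i : Fin (m+1)} (hi : (i : ℕ) < n₀)
    (z : (Fin (m+1) → ℝ) × (Fin (m+1) → ℝ)) :
    Pz n₀ (z.1 ∘ Equiv.swap 0 i, z.2) = Pz n₀ z ∘ Equiv.swap 0 i := by
  have h0 : 0 < n₀ := hn₀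
  funext j
  rcases eq_or_ne j 0 with rfl | hj0
  · simp [Pz, Equiv.swap_apply_left, h0, hi]
  rcases eq_or_ne j i with rfl | hji
  · simp [Pz, Equiv.swap_apply_right, h0, hi]
  · have hfix : (Equiv.swap (0 : Fin (m+1)) i) j = j :=
      Equiv.swap_apply_of_ne_of_ne hj0 hji
    simp [Pz, hfix]

private lemma aux_int_if {lam : ℝ} (hlam : lam ∈ Set.Ioc (0:ℝ) 1) :
    ∫ u, (if u ≤ lam then (1:ℝ) else 0) ∂(volume.restrict (Set.Ioo (0:ℝ) 1)) = lam := by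
  have h3 : (fun u : ℝ => if u ≤ lam then (1:ℝ) else 0)
      = (Set.Iic lam).indicator (fun _ => (1:ℝ)) := by
    funext u; simp [Set.indicator_apply, Set.mem_Iic]
  rw [h3, integral_indicator_const (1:ℝ) measurableSet_Iic, measureReal_def, aux_unif_Iic hlam]
  simp [ENNReal.toReal_ofReal hlam.1.le]

private lemma countLe_comp_perm {m : ℕ} (q : Fin (m+1) → ℝ) (σ : Equiv.Perm (Fin (m+1)))
    (t : ℝ) : countLe (q ∘ σ) t = countLe q t := by
  unfold countLe
  rw [Finset.card_filter, Finset.card_filter]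
  simp only [Function.comp_apply]
  exact Equiv.sum_comp σ fun j => if q j ≤ t then 1 else 0

private lemma countLe_update {m : ℕ} (q : Fin (m+1) → ℝ) {t : ℝ} (h0 : 0 ≤ t)
    (hq : q 0 ≤ t) : countLe (Function.update q 0 0) t = countLe q t := by
  unfold countLe
  congr 1
  refine Finset.filter_congr fun j _ => ?_
  rcases eq_or_ne j 0 with rfl | hj
  · simp only [Function.update_self, eq_iff_iff]
    exact iff_of_true h0 hq
  · simp [Function.update_of_ne hj]

private lemma aux_ofReal_if_div {c : Prop} [Decidable c] (r : ℝ) :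
    ENNReal.ofReal ((if c then (1:ℝ) else 0) / r)
      = (if c then (1:ℝ≥0∞) else 0) * ENNReal.ofReal (1 / r) := by
  by_cases hc : c
  · simp [hc]
  · simp [hc]

private lemma aux_ofReal_card {m n₀ : ℕ} (lam : ℝ) (e : (Fin (m+1) → ℝ) → ℝ)
    (z : (Fin (m+1) → ℝ) × (Fin (m+1) → ℝ)) :
    ENNReal.ofReal ((((Finset.univ.filter fun i : Fin (m+1) =>
          Pz n₀ z i ≤ lam ∧ (i : ℕ) < n₀).card : ℝ)) / e (Pz n₀ z))
    = ∑ i : Fin (m+1), (if Pz n₀ z i ≤ lam ∧ (i : ℕ) < n₀ then (1:ℝ≥0∞) else 0)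
        * ENNReal.ofReal (1 / e (Pz n₀ z)) := by
  rw [div_eq_mul_one_div, ENNReal.ofReal_mul (Nat.cast_nonneg _), ENNReal.ofReal_natCast,
    Finset.card_filter, Nat.cast_sum, Finset.sum_mul]
  refine Finset.sum_congr rfl fun i _ => ?_
  by_cases hc : Pz n₀ z i ≤ lam ∧ (i : ℕ) < n₀ <;> simp [hc]

/-- (a) For `Ugen` uniform(0,1) independent of a positive variable `X` and `λ ∈ (0,1]`,
`E[1{Ugen ≤ λ}/X] = λ·E[1/X]`.  (b) More specifically, in the BI model with `N₀ = n₀ > 0`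
fixed (the true p-values being the first `n₀` coordinates, i.i.d. uniform(0,1) and
independent of the false p-values) and `n̂₀ = e(p)` a positive measurable function of
`(F̂_n(t))_{t ≥ λ}`:
`E[V(λ)/n̂₀] = n₀·E[1{p₁ ≤ λ}/n̂₀] = λ·E[n₀/n̂₀⁽¹⁾]`, where `n̂₀⁽¹⁾ = e(p⁽¹⁾)` has `p₁`
replaced by `0`. -/
theorem uniform_section_identity {Ω : Type*} [MeasurableSpace Ω]
    (μ : Measure Ω) [IsProbabilityMeasure μ]
    (lam : ℝ) (hlam : lam ∈ Set.Ioc (0 : ℝ) 1)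
    -- part (a) data
    (Ugen X : Ω → ℝ) (hUgen : Measurable Ugen) (hXmeas : Measurable X)
    (hXpos : ∀ ω, 0 < X ω) (hUX : IndepFun Ugen X μ)
    (hUgenUnif : Measure.map Ugen μ = volume.restrict (Set.Ioo (0 : ℝ) 1))
    -- part (b) data: p-values `p i = if i < n₀ then U i else ξ i`
    {m : ℕ} (n₀ : ℕ) (hn₀ : 1 ≤ n₀) (hn₀le : n₀ ≤ m + 1)
    (U ξ : Fin (m + 1) → Ω → ℝ)
    (hUmeas : ∀ i, Measurable (U i)) (hξmeas : ∀ i, Measurable (ξ i))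
    (hUindep : iIndepFun U μ)
    (hUξ : IndepFun (fun ω => fun i => U i ω) (fun ω => fun i => ξ i ω) μ)
    (hunif : ∀ i, Measure.map (U i) μ = volume.restrict (Set.Ioo (0 : ℝ) 1))
    (hξrange : ∀ i ω, ξ i ω ∈ Set.Icc (0 : ℝ) 1)
    (e : (Fin (m + 1) → ℝ) → ℝ) (hemeas : Measurable e) (hepos : ∀ q, 0 < e q)
    (hecdf : ∀ q q' : Fin (m + 1) → ℝ,
      (∀ t, lam ≤ t → countLe q t = countLe q' t) → e q = e q') :
    (∫ ω, (if Ugen ω ≤ lam then (1 : ℝ) else 0) / X ω ∂μ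
        = lam * ∫ ω, 1 / X ω ∂μ) ∧
    (∫ ω,
        (((Finset.univ.filter fun i : Fin (m + 1) =>
            (if i.1 < n₀ then U i ω else ξ i ω) ≤ lam ∧ i.1 < n₀).card : ℝ)
          / e (fun i => if i.1 < n₀ then U i ω else ξ i ω)) ∂μ
      = (n₀ : ℝ) *
        ∫ ω, (if U 0 ω ≤ lam then (1 : ℝ) else 0)
            / e (fun i => if i.1 < n₀ then U i ω else ξ i ω) ∂μ) ∧
    (∫ ω,
        (((Finset.univ.filter fun i : Fin (m + 1) =>
            (if i.1 < n₀ then U i ω else ξ i ω) ≤ lam ∧ i.1 < n₀).card : ℝ)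
          / e (fun i => if i.1 < n₀ then U i ω else ξ i ω)) ∂μ
      = lam *
        ∫ ω, (n₀ : ℝ)
            / e (Function.update (fun i => if i.1 < n₀ then U i ω else ξ i ω) 0 0) ∂μ) := by
  classical
  haveI : IsProbabilityMeasure (volume.restrict (Set.Ioo (0:ℝ) 1)) := aux_unif_prob
  -- ### Part (a)
  have partA : ∫ ω, (if Ugen ω ≤ lam then (1 : ℝ) else 0) / X ω ∂μ
      = lam * ∫ ω, 1 / X ω ∂μ := by
    have hf : Measurable fun u : ℝ => if u ≤ lam then (1:ℝ) else 0 :=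
      Measurable.ite measurableSet_Iic measurable_const measurable_const
    have hg : Measurable fun x : ℝ => 1 / x := measurable_const.div measurable_id
    have hind : IndepFun ((fun u : ℝ => if u ≤ lam then (1:ℝ) else 0) ∘ Ugen)
        ((fun x : ℝ => 1 / x) ∘ X) μ := hUX.comp hf hg
    have h1 : ∫ ω, (if Ugen ω ≤ lam then (1:ℝ) else 0) / X ω ∂μ
        = ∫ ω, ((fun u : ℝ => if u ≤ lam then (1:ℝ) else 0) ∘ Ugen) ω
            * ((fun x : ℝ => 1 / x) ∘ X) ω ∂μ := by
      refine integral_congr_ae (ae_of_all _ fun ω => ?_)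
      simp only [Function.comp_apply]
      rw [div_eq_mul_one_div]
    rw [h1, hind.integral_fun_mul_eq_mul_integral (hf.comp hUgen).aestronglyMeasurable
        (hg.comp hXmeas).aestronglyMeasurable]
    have h2 : ∫ ω, ((fun u : ℝ => if u ≤ lam then (1:ℝ) else 0) ∘ Ugen) ω ∂μ = lam := by
      simp only [Function.comp_apply]
      rw [← integral_map hUgen.aemeasurable hf.aestronglyMeasurable, hUgenUnif]
      exact aux_int_if hlam
    rw [h2]
    congr 1
  -- ### Part (b) setup
  have hUvec : Measurable (fun ω (i : Fin (m+1)) => U i ω) := measurable_pi_iff.2 hUmeas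
  have hxvec : Measurable (fun ω (i : Fin (m+1)) => ξ i ω) := measurable_pi_iff.2 hξmeas
  haveI : IsProbabilityMeasure (μ.map (fun ω (i : Fin (m+1)) => ξ i ω)) := Measure.isProbabilityMeasure_map hxvec.aemeasurable
  have hUpi : μ.map (fun ω (i : Fin (m+1)) => U i ω) = (Measure.pi fun _ : Fin (m+1) => (volume.restrict (Set.Ioo (0:ℝ) 1))) := by
    refine (Measure.pi_eq fun s hs => ?_).symm
    rw [Measure.map_apply hUvec (MeasurableSet.univ_pi hs)]
    have hpre : (fun ω (i : Fin (m+1)) => U i ω) ⁻¹' Set.univ.pi s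
        = ⋂ i ∈ Finset.univ, U i ⁻¹' s i := by
      ext ω; simp [Set.mem_univ_pi]
    rw [hpre, hUindep.measure_inter_preimage_eq_mul Finset.univ (fun i _ => hs i)]
    exact Finset.prod_congr rfl fun i _ => by
      rw [← hunif i, Measure.map_apply (hUmeas i) (hs i)]
  have hK : μ.map (fun ω => (fun i : Fin (m+1) => U i ω, fun i : Fin (m+1) => ξ i ω))
      = ((Measure.pi fun _ : Fin (m+1) => (volume.restrict (Set.Ioo (0:ℝ) 1))).prod (μ.map (fun ω (i : Fin (m+1)) => ξ i ω))) := by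
    rw [(indepFun_iff_map_prod_eq_prod_map_map hUvec.aemeasurable hxvec.aemeasurable).1 hUξ,
      hUpi]
  have hT : ∀ F : ((Fin (m+1) → ℝ) × (Fin (m+1) → ℝ)) → ℝ≥0∞, Measurable F →
      ∫⁻ ω, F (fun i => U i ω, fun i => ξ i ω) ∂μ = ∫⁻ z, F z ∂((Measure.pi fun _ : Fin (m+1) => (volume.restrict (Set.Ioo (0:ℝ) 1))).prod (μ.map (fun ω (i : Fin (m+1)) => ξ i ω))) := by
    intro F hF
    rw [← hK, lintegral_map hF (hUvec.prodMk hxvec)]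
  have hPz_pair : ∀ (ω : Ω) (i : Fin (m+1)), (if (i : ℕ) < n₀ then U i ω else ξ i ω)
      = Pz n₀ (fun j => U j ω, fun j => ξ j ω) i := fun _ _ => rfl
  have hPz_fun : ∀ ω : Ω, (fun i : Fin (m+1) => if (i : ℕ) < n₀ then U i ω else ξ i ω)
      = Pz n₀ (fun j => U j ω, fun j => ξ j ω) := fun _ => rfl
  have eperm : ∀ (σ : Equiv.Perm (Fin (m+1))) (q : Fin (m+1) → ℝ), e (q ∘ σ) = e q :=
    fun σ q => hecdf _ _ fun t _ => countLe_comp_perm q σ t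
  have eup : ∀ q : Fin (m+1) → ℝ, q 0 ≤ lam → e (Function.update q 0 0) = e q :=
    fun q hq => hecdf _ _ fun t ht => countLe_update q (le_trans hlam.1.le ht) (le_trans hq ht)
  have h1emeas : Measurable fun q : Fin (m+1) → ℝ => ENNReal.ofReal (1 / e q) :=
    ENNReal.measurable_ofReal.comp (measurable_const.div hemeas)
  have hg0meas : Measurable fun z : (Fin (m+1) → ℝ) × (Fin (m+1) → ℝ) =>
      (if z.1 0 ≤ lam then (1:ℝ≥0∞) else 0) * ENNReal.ofReal (1 / e (Pz n₀ z)) := by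
    refine Measurable.mul ?_ (h1emeas.comp (Pz_meas n₀))
    have hz0 : Measurable fun z : (Fin (m+1) → ℝ) × (Fin (m+1) → ℝ) => z.1 0 := by
      exact (measurable_pi_apply 0).comp measurable_fst
    exact Measurable.ite (measurableSet_le hz0 measurable_const)
      measurable_const measurable_const
  have hswap : ∀ i : Fin (m+1), (i : ℕ) < n₀ →
      (∫⁻ z, (if z.1 i ≤ lam then (1:ℝ≥0∞) else 0)
          * ENNReal.ofReal (1 / e (Pz n₀ z)) ∂((Measure.pi fun _ : Fin (m+1) => (volume.restrict (Set.Ioo (0:ℝ) 1))).prod (μ.map (fun ω (i : Fin (m+1)) => ξ i ω))))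
        = ∫⁻ z, (if z.1 0 ≤ lam then (1:ℝ≥0∞) else 0)
          * ENNReal.ofReal (1 / e (Pz n₀ z)) ∂((Measure.pi fun _ : Fin (m+1) => (volume.restrict (Set.Ioo (0:ℝ) 1))).prod (μ.map (fun ω (i : Fin (m+1)) => ξ i ω))) := by
    intro i hi
    have hmp1 : MeasurePreserving (fun u : Fin (m+1) → ℝ => u ∘ Equiv.swap 0 i) (Measure.pi fun _ : Fin (m+1) => (volume.restrict (Set.Ioo (0:ℝ) 1))) (Measure.pi fun _ : Fin (m+1) => (volume.restrict (Set.Ioo (0:ℝ) 1))) :=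
      ⟨measurable_pi_iff.2 fun j => measurable_pi_apply _, aux_map_pi_comp_perm _ _⟩
    have hmp : MeasurePreserving
        (fun z : (Fin (m+1) → ℝ) × (Fin (m+1) → ℝ) => (z.1 ∘ Equiv.swap 0 i, z.2))
        ((Measure.pi fun _ : Fin (m+1) => (volume.restrict (Set.Ioo (0:ℝ) 1))).prod (μ.map (fun ω (i : Fin (m+1)) => ξ i ω))) ((Measure.pi fun _ : Fin (m+1) => (volume.restrict (Set.Ioo (0:ℝ) 1))).prod (μ.map (fun ω (i : Fin (m+1)) => ξ i ω))) := hmp1.prod (MeasurePreserving.id _)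
    conv_rhs => rw [← hmp.map_eq]
    rw [lintegral_map hg0meas hmp.measurable]
    refine lintegral_congr fun z => ?_
    have h1 : (z.1 ∘ Equiv.swap (0 : Fin (m+1)) i) 0 = z.1 i := by
      simp [Equiv.swap_apply_left]
    simp only [Pz_swap hn₀ hi, h1, eperm]
  -- cardinality of the index set of true nulls
  have hcardn : (Finset.univ.filter fun i : Fin (m+1) => (i : ℕ) < n₀).card = n₀ := by
    have hset : (Finset.univ.filter fun i : Fin (m+1) => (i : ℕ) < n₀)
        = Finset.map ⟨Fin.castLE hn₀le, Fin.castLE_injective hn₀le⟩ Finset.univ := by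
      ext j
      simp only [Finset.mem_filter, Finset.mem_map, Finset.mem_univ, true_and,
        Function.Embedding.coeFn_mk]
      constructor
      · intro hj; exact ⟨⟨j.1, hj⟩, by ext; rfl⟩
      · rintro ⟨i, rfl⟩; exact i.isLt
    rw [hset, Finset.card_map, Finset.card_univ, Fintype.card_fin]
  -- measurability of the real integrands
  have hcardmeas : Measurable fun z : (Fin (m+1) → ℝ) × (Fin (m+1) → ℝ) =>
      (((Finset.univ.filter fun i : Fin (m+1) =>
        Pz n₀ z i ≤ lam ∧ (i : ℕ) < n₀).card : ℝ)) := by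
    simp_rw [Finset.card_filter, Nat.cast_sum, Nat.cast_ite, Nat.cast_one, Nat.cast_zero]
    refine Finset.measurable_sum _ fun i _ => ?_
    have hsi : MeasurableSet {z : (Fin (m+1) → ℝ) × (Fin (m+1) → ℝ) |
        Pz n₀ z i ≤ lam ∧ (i : ℕ) < n₀} := by
      rw [Set.setOf_and]
      exact (measurableSet_le ((measurable_pi_apply i).comp (Pz_meas n₀))
        measurable_const).inter (MeasurableSet.const _)
    exact Measurable.ite hsi measurable_const measurable_const
  have hf1meas : Measurable fun ω =>
      (((Finset.univ.filter fun i : Fin (m + 1) =>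
          (if i.1 < n₀ then U i ω else ξ i ω) ≤ lam ∧ i.1 < n₀).card : ℝ)
        / e (fun i => if i.1 < n₀ then U i ω else ξ i ω)) := by
    simp only [hPz_pair, hPz_fun]
    exact (hcardmeas.div (hemeas.comp (Pz_meas n₀))).comp (hUvec.prodMk hxvec)
  have hf2meas : Measurable fun ω => (if U 0 ω ≤ lam then (1 : ℝ) else 0)
      / e (fun i => if i.1 < n₀ then U i ω else ξ i ω) := by
    simp only [hPz_pair, hPz_fun]
    refine Measurable.div ?_ ?_
    · exact Measurable.ite (measurableSet_le (hUmeas 0) measurable_const)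
        measurable_const measurable_const
    · exact (hemeas.comp (Pz_meas n₀)).comp (hUvec.prodMk hxvec)
  have hupmeas : Measurable fun z : (Fin (m+1) → ℝ) × (Fin (m+1) → ℝ) =>
      Function.update (Pz n₀ z) 0 0 := by
    refine measurable_pi_iff.2 fun j => ?_
    simp_rw [Function.update_apply]
    rcases eq_or_ne j 0 with rfl | hj
    · simp
    · simp only [hj, if_false]
      exact (measurable_pi_apply j).comp (Pz_meas n₀)
  have hf3meas : Measurable fun ω => (n₀ : ℝ)
      / e (Function.update (fun i : Fin (m+1) => if i.1 < n₀ then U i ω else ξ i ω) 0 0) := by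
    simp only [hPz_fun]
    exact (measurable_const.div (hemeas.comp hupmeas)).comp (hUvec.prodMk hxvec)
  -- the central lintegral identity for the common LHS
  have hFmeas : Measurable fun z : (Fin (m+1) → ℝ) × (Fin (m+1) → ℝ) =>
      ENNReal.ofReal ((((Finset.univ.filter fun i : Fin (m+1) =>
        Pz n₀ z i ≤ lam ∧ (i : ℕ) < n₀).card : ℝ)) / e (Pz n₀ z)) :=
    ENNReal.measurable_ofReal.comp (hcardmeas.div (hemeas.comp (Pz_meas n₀)))
  have hb1main : (∫⁻ ω, ENNReal.ofReal
      (((Finset.univ.filter fun i : Fin (m + 1) =>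
          (if i.1 < n₀ then U i ω else ξ i ω) ≤ lam ∧ i.1 < n₀).card : ℝ)
        / e fun i => if i.1 < n₀ then U i ω else ξ i ω) ∂μ)
      = (n₀ : ℝ≥0∞) * (∫⁻ z, (if z.1 0 ≤ lam then (1:ℝ≥0∞) else 0)
          * ENNReal.ofReal (1 / e (Pz n₀ z)) ∂((Measure.pi fun _ : Fin (m+1) => (volume.restrict (Set.Ioo (0:ℝ) 1))).prod (μ.map (fun ω (i : Fin (m+1)) => ξ i ω)))) := by
    have hstep1 : (∫⁻ ω, ENNReal.ofReal
        (((Finset.univ.filter fun i : Fin (m + 1) =>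
            (if i.1 < n₀ then U i ω else ξ i ω) ≤ lam ∧ i.1 < n₀).card : ℝ)
          / e fun i => if i.1 < n₀ then U i ω else ξ i ω) ∂μ)
        = ∫⁻ z, ENNReal.ofReal ((((Finset.univ.filter fun i : Fin (m+1) =>
            Pz n₀ z i ≤ lam ∧ (i : ℕ) < n₀).card : ℝ)) / e (Pz n₀ z)) ∂((Measure.pi fun _ : Fin (m+1) => (volume.restrict (Set.Ioo (0:ℝ) 1))).prod (μ.map (fun ω (i : Fin (m+1)) => ξ i ω))) := by
      rw [← hT _ hFmeas]
      simp only [hPz_pair, hPz_fun]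
    rw [hstep1]
    simp_rw [aux_ofReal_card lam e]
    rw [lintegral_finset_sum]
    swap
    · intro i _
      refine Measurable.mul ?_ (h1emeas.comp (Pz_meas n₀))
      have hsi : MeasurableSet {z : (Fin (m+1) → ℝ) × (Fin (m+1) → ℝ) |
          Pz n₀ z i ≤ lam ∧ (i : ℕ) < n₀} := by
        rw [Set.setOf_and]
        exact (measurableSet_le ((measurable_pi_apply i).comp (Pz_meas n₀))
          measurable_const).inter (MeasurableSet.const _)
      exact Measurable.ite hsi measurable_const measurable_const
    have hterm : ∀ i : Fin (m+1),
        (∫⁻ z, (if Pz n₀ z i ≤ lam ∧ (i : ℕ) < n₀ then (1:ℝ≥0∞) else 0)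
          * ENNReal.ofReal (1 / e (Pz n₀ z)) ∂((Measure.pi fun _ : Fin (m+1) => (volume.restrict (Set.Ioo (0:ℝ) 1))).prod (μ.map (fun ω (i : Fin (m+1)) => ξ i ω))))
        = if (i : ℕ) < n₀ then (∫⁻ z, (if z.1 0 ≤ lam then (1:ℝ≥0∞) else 0)
          * ENNReal.ofReal (1 / e (Pz n₀ z)) ∂((Measure.pi fun _ : Fin (m+1) => (volume.restrict (Set.Ioo (0:ℝ) 1))).prod (μ.map (fun ω (i : Fin (m+1)) => ξ i ω)))) else 0 := by
      intro i
      by_cases hi : (i : ℕ) < n₀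
      · rw [if_pos hi, ← hswap i hi]
        refine lintegral_congr fun z => ?_
        rw [Pz_apply_lt hi]
        simp [hi]
      · rw [if_neg hi]
        have hz : ∀ z : (Fin (m+1) → ℝ) × (Fin (m+1) → ℝ),
            (if Pz n₀ z i ≤ lam ∧ (i : ℕ) < n₀ then (1:ℝ≥0∞) else 0)
              * ENNReal.ofReal (1 / e (Pz n₀ z)) = 0 := by
          intro z; simp [hi]
        simp_rw [hz]
        exact lintegral_zero
    simp_rw [hterm]
    rw [Finset.sum_ite, Finset.sum_const, Finset.sum_const_zero, add_zero, hcardn,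
      nsmul_eq_mul]
  -- transfer of the RHS of (b1)
  have hG0meas : Measurable fun z : (Fin (m+1) → ℝ) × (Fin (m+1) → ℝ) =>
      ENNReal.ofReal ((if z.1 0 ≤ lam then (1:ℝ) else 0) / e (Pz n₀ z)) := by
    have hz0 : Measurable fun z : (Fin (m+1) → ℝ) × (Fin (m+1) → ℝ) => z.1 0 := by
      exact (measurable_pi_apply 0).comp measurable_fst
    refine ENNReal.measurable_ofReal.comp (Measurable.div ?_ (hemeas.comp (Pz_meas n₀)))
    exact Measurable.ite (measurableSet_le hz0 measurable_const)
      measurable_const measurable_const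
  have hG0 : (∫⁻ ω, ENNReal.ofReal ((if U 0 ω ≤ lam then (1:ℝ) else 0)
      / e fun i => if i.1 < n₀ then U i ω else ξ i ω) ∂μ)
      = ∫⁻ z, (if z.1 0 ≤ lam then (1:ℝ≥0∞) else 0)
          * ENNReal.ofReal (1 / e (Pz n₀ z)) ∂((Measure.pi fun _ : Fin (m+1) => (volume.restrict (Set.Ioo (0:ℝ) 1))).prod (μ.map (fun ω (i : Fin (m+1)) => ξ i ω))) := by
    have h1 : (∫⁻ ω, ENNReal.ofReal ((if U 0 ω ≤ lam then (1:ℝ) else 0)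
        / e fun i => if i.1 < n₀ then U i ω else ξ i ω) ∂μ)
        = ∫⁻ z, ENNReal.ofReal ((if z.1 0 ≤ lam then (1:ℝ) else 0) / e (Pz n₀ z)) ∂((Measure.pi fun _ : Fin (m+1) => (volume.restrict (Set.Ioo (0:ℝ) 1))).prod (μ.map (fun ω (i : Fin (m+1)) => ξ i ω))) := by
      rw [← hT _ hG0meas]
      simp only [hPz_fun]
    rw [h1]
    exact lintegral_congr fun z => aux_ofReal_if_div _
  -- conclusion (b1)
  have hb1 : (∫ ω,
        (((Finset.univ.filter fun i : Fin (m + 1) =>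
            (if i.1 < n₀ then U i ω else ξ i ω) ≤ lam ∧ i.1 < n₀).card : ℝ)
          / e (fun i => if i.1 < n₀ then U i ω else ξ i ω)) ∂μ)
      = (n₀ : ℝ) *
        ∫ ω, (if U 0 ω ≤ lam then (1 : ℝ) else 0)
            / e (fun i => if i.1 < n₀ then U i ω else ξ i ω) ∂μ := by
    rw [integral_eq_lintegral_of_nonneg_ae
        (ae_of_all _ fun ω => div_nonneg (Nat.cast_nonneg _) (hepos _).le)
        hf1meas.aestronglyMeasurable,
      integral_eq_lintegral_of_nonneg_ae
        (ae_of_all _ fun ω => div_nonneg (by split <;> norm_num) (hepos _).le)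
        hf2meas.aestronglyMeasurable]
    rw [hb1main, hG0, ENNReal.toReal_mul, ENNReal.toReal_natCast]
  -- the inner function for (b2)
  have hinner_meas : Measurable fun z : (Fin (m+1) → ℝ) × (Fin (m+1) → ℝ) =>
      ENNReal.ofReal (1 / e (Function.update (Pz n₀ z) 0 0)) :=
    h1emeas.comp hupmeas
  have hkmeas : Measurable fun u : Fin (m+1) → ℝ =>
      ∫⁻ x, ENNReal.ofReal (1 / e (Function.update (Pz n₀ (u, x)) 0 0)) ∂(μ.map (fun ω (i : Fin (m+1)) => ξ i ω)) := by
    exact Measurable.lintegral_prod_right hinner_meas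
  have hb2main : (∫⁻ z, (if z.1 0 ≤ lam then (1:ℝ≥0∞) else 0)
          * ENNReal.ofReal (1 / e (Pz n₀ z)) ∂((Measure.pi fun _ : Fin (m+1) => (volume.restrict (Set.Ioo (0:ℝ) 1))).prod (μ.map (fun ω (i : Fin (m+1)) => ξ i ω))))
      = ENNReal.ofReal lam * (∫⁻ z, ENNReal.ofReal (1 / e (Function.update (Pz n₀ z) 0 0)) ∂((Measure.pi fun _ : Fin (m+1) => (volume.restrict (Set.Ioo (0:ℝ) 1))).prod (μ.map (fun ω (i : Fin (m+1)) => ξ i ω)))) := by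
    have hmeasprod : Measurable fun z : (Fin (m+1) → ℝ) × (Fin (m+1) → ℝ) =>
        (if z.1 0 ≤ lam then (1:ℝ≥0∞) else 0)
          * ENNReal.ofReal (1 / e (Function.update (Pz n₀ z) 0 0)) := by
      have hz0 : Measurable fun z : (Fin (m+1) → ℝ) × (Fin (m+1) → ℝ) => z.1 0 := by
        exact (measurable_pi_apply 0).comp measurable_fst
      exact Measurable.mul (Measurable.ite (measurableSet_le hz0 measurable_const)
        measurable_const measurable_const) hinner_meas
    have hA : (∫⁻ z, (if z.1 0 ≤ lam then (1:ℝ≥0∞) else 0)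
          * ENNReal.ofReal (1 / e (Pz n₀ z)) ∂((Measure.pi fun _ : Fin (m+1) => (volume.restrict (Set.Ioo (0:ℝ) 1))).prod (μ.map (fun ω (i : Fin (m+1)) => ξ i ω))))
        = ∫⁻ z, (if z.1 0 ≤ lam then (1:ℝ≥0∞) else 0)
            * ENNReal.ofReal (1 / e (Function.update (Pz n₀ z) 0 0)) ∂((Measure.pi fun _ : Fin (m+1) => (volume.restrict (Set.Ioo (0:ℝ) 1))).prod (μ.map (fun ω (i : Fin (m+1)) => ξ i ω))) := by
      refine lintegral_congr fun z => ?_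
      by_cases h : z.1 0 ≤ lam
      · have h0 : Pz n₀ z 0 = z.1 0 := Pz_apply_lt (i := 0) hn₀ z
        rw [eup (Pz n₀ z) (by rw [h0]; exact h)]
      · simp [h]
    rw [hA]
    -- Fubini over the product measure
    have hL0B : (∫⁻ z, (if z.1 0 ≤ lam then (1:ℝ≥0∞) else 0)
        * ENNReal.ofReal (1 / e (Function.update (Pz n₀ z) 0 0)) ∂((Measure.pi fun _ : Fin (m+1) => (volume.restrict (Set.Ioo (0:ℝ) 1))).prod (μ.map (fun ω (i : Fin (m+1)) => ξ i ω))))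
        = ∫⁻ u, (if u 0 ≤ lam then (1:ℝ≥0∞) else 0)
            * ∫⁻ x, ENNReal.ofReal (1 / e (Function.update (Pz n₀ (u, x)) 0 0)) ∂(μ.map (fun ω (i : Fin (m+1)) => ξ i ω))
            ∂(Measure.pi fun _ : Fin (m+1) => (volume.restrict (Set.Ioo (0:ℝ) 1))) := by
      rw [lintegral_prod _ hmeasprod.aemeasurable]
      refine lintegral_congr fun u => ?_
      have hx : Measurable fun x : Fin (m+1) → ℝ =>
          ENNReal.ofReal (1 / e (Function.update (Pz n₀ (u, x)) 0 0)) :=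
        hinner_meas.comp measurable_prodMk_left
      exact lintegral_const_mul (if u 0 ≤ lam then (1:ℝ≥0∞) else 0) hx
    have hMB : (∫⁻ z, ENNReal.ofReal (1 / e (Function.update (Pz n₀ z) 0 0)) ∂((Measure.pi fun _ : Fin (m+1) => (volume.restrict (Set.Ioo (0:ℝ) 1))).prod (μ.map (fun ω (i : Fin (m+1)) => ξ i ω))))
        = ∫⁻ u, ∫⁻ x, ENNReal.ofReal (1 / e (Function.update (Pz n₀ (u, x)) 0 0)) ∂(μ.map (fun ω (i : Fin (m+1)) => ξ i ω))
            ∂(Measure.pi fun _ : Fin (m+1) => (volume.restrict (Set.Ioo (0:ℝ) 1))) :=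
      lintegral_prod _ hinner_meas.aemeasurable
    rw [hL0B, hMB]
    -- split off the first coordinate of the pi measure
    have hfs := (measurePreserving_piFinSuccAbove (fun _ : Fin (m+1) => (volume.restrict (Set.Ioo (0:ℝ) 1))) 0).symm
    have hsplit : ∀ F : (Fin (m+1) → ℝ) → ℝ≥0∞, Measurable F →
        (∫⁻ u, F u ∂(Measure.pi fun _ : Fin (m+1) => (volume.restrict (Set.Ioo (0:ℝ) 1))))
          = ∫⁻ a : ℝ, ∫⁻ v : Fin m → ℝ, F ((MeasurableEquiv.piFinSuccAbove (fun _ : Fin (m+1) => ℝ) 0).symm (a, v)) ∂(Measure.pi fun _ : Fin m => (volume.restrict (Set.Ioo (0:ℝ) 1))) ∂(volume.restrict (Set.Ioo (0:ℝ) 1)) := by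
      intro F hF
      have hm : Measurable fun w : ℝ × (Fin m → ℝ) => F ((MeasurableEquiv.piFinSuccAbove (fun _ : Fin (m+1) => ℝ) 0).symm w) := hF.comp hfs.measurable
      rw [← hfs.map_eq, lintegral_map hF hfs.measurable, lintegral_prod _ hm.aemeasurable]
    have hes : ∀ (a : ℝ) (v : Fin m → ℝ),
        (MeasurableEquiv.piFinSuccAbove (fun _ : Fin (m+1) => ℝ) 0).symm (a, v) = Function.update ((MeasurableEquiv.piFinSuccAbove (fun _ : Fin (m+1) => ℝ) 0).symm (0, v)) 0 a := by
      intro a v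
      funext j
      rcases eq_or_ne j 0 with rfl | hj
      · simp [MeasurableEquiv.piFinSuccAbove_symm_apply, Fin.insertNth_apply_same]
      · obtain ⟨l, hl⟩ := Fin.exists_succAbove_eq hj
        simp [MeasurableEquiv.piFinSuccAbove_symm_apply, Function.update_of_ne hj, ← hl,
          Fin.insertNth_apply_succAbove]
    have hes0 : ∀ (a : ℝ) (v : Fin m → ℝ), (MeasurableEquiv.piFinSuccAbove (fun _ : Fin (m+1) => ℝ) 0).symm (a, v) 0 = a := by
      intro a v
      simp [MeasurableEquiv.piFinSuccAbove_symm_apply, Fin.insertNth_apply_same]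
    have hkup : ∀ (u : Fin (m+1) → ℝ) (a : ℝ),
        (∫⁻ x, ENNReal.ofReal
          (1 / e (Function.update (Pz n₀ (Function.update u 0 a, x)) 0 0)) ∂(μ.map (fun ω (i : Fin (m+1)) => ξ i ω)))
        = ∫⁻ x, ENNReal.ofReal (1 / e (Function.update (Pz n₀ (u, x)) 0 0)) ∂(μ.map (fun ω (i : Fin (m+1)) => ξ i ω)) := by
      intro u a
      refine lintegral_congr fun x => ?_
      have hupd : Function.update (Pz n₀ (Function.update u 0 a, x)) 0 0
          = Function.update (Pz n₀ (u, x)) 0 0 := by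
        funext j
        rcases eq_or_ne j 0 with rfl | hj
        · simp
        · rw [Function.update_of_ne hj, Function.update_of_ne hj]
          show (if (j:ℕ) < n₀ then Function.update u 0 a j else x j) = _
          rw [Function.update_of_ne hj]
          rfl
      rw [hupd]
    have hKv : ∀ (a : ℝ) (v : Fin m → ℝ),
        (∫⁻ x, ENNReal.ofReal
          (1 / e (Function.update (Pz n₀ ((MeasurableEquiv.piFinSuccAbove (fun _ : Fin (m+1) => ℝ) 0).symm (a, v), x)) 0 0)) ∂(μ.map (fun ω (i : Fin (m+1)) => ξ i ω)))
        = ∫⁻ x, ENNReal.ofReal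
          (1 / e (Function.update (Pz n₀ ((MeasurableEquiv.piFinSuccAbove (fun _ : Fin (m+1) => ℝ) 0).symm (0, v), x)) 0 0)) ∂(μ.map (fun ω (i : Fin (m+1)) => ξ i ω)) := by
      intro a v
      rw [show ((MeasurableEquiv.piFinSuccAbove (fun _ : Fin (m+1) => ℝ) 0).symm (a, v)) = Function.update ((MeasurableEquiv.piFinSuccAbove (fun _ : Fin (m+1) => ℝ) 0).symm (0, v)) 0 a from hes a v]
      exact hkup _ a
    have hKmeas : Measurable fun v : Fin m → ℝ =>
        ∫⁻ x, ENNReal.ofReal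
          (1 / e (Function.update (Pz n₀ ((MeasurableEquiv.piFinSuccAbove (fun _ : Fin (m+1) => ℝ) 0).symm (0, v), x)) 0 0)) ∂(μ.map (fun ω (i : Fin (m+1)) => ξ i ω)) := by
      exact hkmeas.comp (hfs.measurable.comp (measurable_const.prodMk measurable_id))
    have hF1meas : Measurable fun u : Fin (m+1) → ℝ => (if u 0 ≤ lam then (1:ℝ≥0∞) else 0)
        * ∫⁻ x, ENNReal.ofReal (1 / e (Function.update (Pz n₀ (u, x)) 0 0)) ∂(μ.map (fun ω (i : Fin (m+1)) => ξ i ω)) := by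
      exact Measurable.mul (Measurable.ite (measurableSet_le (measurable_pi_apply 0)
        measurable_const) measurable_const measurable_const) hkmeas
    rw [hsplit _ hF1meas, hsplit _ hkmeas]
    have hinner1 : ∀ a : ℝ, (∫⁻ v, (if ((MeasurableEquiv.piFinSuccAbove (fun _ : Fin (m+1) => ℝ) 0).symm (a, v)) 0 ≤ lam then (1:ℝ≥0∞) else 0)
        * (∫⁻ x, ENNReal.ofReal
            (1 / e (Function.update (Pz n₀ ((MeasurableEquiv.piFinSuccAbove (fun _ : Fin (m+1) => ℝ) 0).symm (a, v), x)) 0 0)) ∂(μ.map (fun ω (i : Fin (m+1)) => ξ i ω))) ∂(Measure.pi fun _ : Fin m => (volume.restrict (Set.Ioo (0:ℝ) 1))))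
        = (if a ≤ lam then (1:ℝ≥0∞) else 0)
          * ∫⁻ v, (∫⁻ x, ENNReal.ofReal
            (1 / e (Function.update (Pz n₀ ((MeasurableEquiv.piFinSuccAbove (fun _ : Fin (m+1) => ℝ) 0).symm (0, v), x)) 0 0)) ∂(μ.map (fun ω (i : Fin (m+1)) => ξ i ω))) ∂(Measure.pi fun _ : Fin m => (volume.restrict (Set.Ioo (0:ℝ) 1))) := by
      intro a
      rw [← lintegral_const_mul _ hKmeas]
      refine lintegral_congr fun v => ?_
      rw [hes0 a v, hKv a v]
    have hinner2 : ∀ a : ℝ, (∫⁻ v, (∫⁻ x, ENNReal.ofReal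
          (1 / e (Function.update (Pz n₀ ((MeasurableEquiv.piFinSuccAbove (fun _ : Fin (m+1) => ℝ) 0).symm (a, v), x)) 0 0)) ∂(μ.map (fun ω (i : Fin (m+1)) => ξ i ω))) ∂(Measure.pi fun _ : Fin m => (volume.restrict (Set.Ioo (0:ℝ) 1))))
        = ∫⁻ v, (∫⁻ x, ENNReal.ofReal
          (1 / e (Function.update (Pz n₀ ((MeasurableEquiv.piFinSuccAbove (fun _ : Fin (m+1) => ℝ) 0).symm (0, v), x)) 0 0)) ∂(μ.map (fun ω (i : Fin (m+1)) => ξ i ω))) ∂(Measure.pi fun _ : Fin m => (volume.restrict (Set.Ioo (0:ℝ) 1))) := by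
      intro a
      exact lintegral_congr fun v => hKv a v
    simp_rw [hinner1, hinner2]
    have hif : Measurable fun a : ℝ => (if a ≤ lam then (1:ℝ≥0∞) else 0) :=
      Measurable.ite measurableSet_Iic measurable_const measurable_const
    rw [lintegral_mul_const _ hif, aux_lint_if hlam, lintegral_const]
    simp [measure_univ]
  -- transfer of the RHS of (b2)
  have hRHS2meas : Measurable fun z : (Fin (m+1) → ℝ) × (Fin (m+1) → ℝ) =>
      ENNReal.ofReal ((n₀ : ℝ) / e (Function.update (Pz n₀ z) 0 0)) :=
    ENNReal.measurable_ofReal.comp (measurable_const.div (hemeas.comp hupmeas))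
  have hRHS2 : (∫⁻ ω, ENNReal.ofReal ((n₀ : ℝ)
      / e (Function.update (fun i : Fin (m+1) => if i.1 < n₀ then U i ω else ξ i ω) 0 0)) ∂μ)
      = (n₀ : ℝ≥0∞) * (∫⁻ z, ENNReal.ofReal (1 / e (Function.update (Pz n₀ z) 0 0)) ∂((Measure.pi fun _ : Fin (m+1) => (volume.restrict (Set.Ioo (0:ℝ) 1))).prod (μ.map (fun ω (i : Fin (m+1)) => ξ i ω)))) := by
    have h1 : (∫⁻ ω, ENNReal.ofReal ((n₀ : ℝ)
        / e (Function.update (fun i : Fin (m+1) => if i.1 < n₀ then U i ω else ξ i ω) 0 0)) ∂μ)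
        = ∫⁻ z, ENNReal.ofReal ((n₀ : ℝ) / e (Function.update (Pz n₀ z) 0 0)) ∂((Measure.pi fun _ : Fin (m+1) => (volume.restrict (Set.Ioo (0:ℝ) 1))).prod (μ.map (fun ω (i : Fin (m+1)) => ξ i ω))) := by
      rw [← hT _ hRHS2meas]
      simp only [hPz_fun]
    rw [h1, ← lintegral_const_mul _ hinner_meas]
    refine lintegral_congr fun z => ?_
    rw [div_eq_mul_one_div, ENNReal.ofReal_mul (Nat.cast_nonneg _), ENNReal.ofReal_natCast]
  -- conclusion (b2)
  have hb2 : (∫ ω,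
        (((Finset.univ.filter fun i : Fin (m + 1) =>
            (if i.1 < n₀ then U i ω else ξ i ω) ≤ lam ∧ i.1 < n₀).card : ℝ)
          / e (fun i => if i.1 < n₀ then U i ω else ξ i ω)) ∂μ)
      = lam *
        ∫ ω, (n₀ : ℝ)
            / e (Function.update (fun i => if i.1 < n₀ then U i ω else ξ i ω) 0 0) ∂μ := by
    rw [integral_eq_lintegral_of_nonneg_ae
        (ae_of_all _ fun ω => div_nonneg (Nat.cast_nonneg _) (hepos _).le)
        hf1meas.aestronglyMeasurable,
      integral_eq_lintegral_of_nonneg_ae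
        (ae_of_all _ fun ω => div_nonneg (Nat.cast_nonneg _) (hepos _).le)
        hf3meas.aestronglyMeasurable]
    rw [hb1main, hRHS2, hb2main, ← mul_assoc, mul_comm ((n₀:ℕ) : ℝ≥0∞) (ENNReal.ofReal lam),
      mul_assoc, ENNReal.toReal_mul, ENNReal.toReal_ofReal hlam.1.le]
  exact ⟨partA, hb1, hb2⟩
end
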